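/- arXiv:1305.5795 — 4 statements merged into one kernel-verified Lean document; each statement's English description precedes it below -/
import Mathlib

section
/- Let Δ be the broken circuit complex of an ordered matroid (M,<) and Σ the independence (matroid) complex of M. For a face F of Δ, let V₁ and V₂ be the vertex sets of link_Δ F and link_Σ F respectively. If V₂ \ V₁ is nonempty, then there exists u ∈ V₁ such that u < v for all v ∈ V₂ \ V₁. -/
open Set Polynomial Matroid CategoryTheory

universe u

namespace PaperBC

variable {α : Type*}

/-- A circuit of a matroid: a minimal dependent subset of the ground set. -/
def MCircuit (M : Matroid α) (C : Set α) : Prop :=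
  ¬ M.Indep C ∧ C ⊆ M.E ∧ ∀ D, D ⊂ C → M.Indep D

/-- A broken circuit with respect to an order relation `r` (to be read as `≤`):
a circuit with its least element removed. -/
def BrokenCircuit (r : α → α → Prop) (M : Matroid α) (B : Set α) : Prop :=
  ∃ C e, MCircuit M C ∧ e ∈ C ∧ (∀ x ∈ C, r e x) ∧ B = C \ {e}

/-- The broken circuit complex: subsets of the ground set containing no broken circuit. -/
def BCC (r : α → α → Prop) (M : Matroid α) : Set (Set α) :=
  {F | F ⊆ M.E ∧ ∀ B, BrokenCircuit r M B → ¬ B ⊆ F}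

/-- The independence (matroid) complex. -/
def IndepComplex (M : Matroid α) : Set (Set α) := {F | M.Indep F}

/-- The link of a face in a complex. -/
def linkOf (Δ : Set (Set α)) (F : Set α) : Set (Set α) :=
  {G | F ∪ G ∈ Δ ∧ Disjoint F G}

/-- Vertex set of a complex. -/
def vertexSet (Δ : Set (Set α)) : Set α := {v | {v} ∈ Δ}

def dimLE (Δ : Set (Set α)) (d : ℕ) : Prop := ∀ s ∈ Δ, s.ncard ≤ d + 1

def dimEq (Δ : Set (Set α)) (d : ℕ) : Prop := dimLE Δ d ∧ ∃ s ∈ Δ, s.ncard = d + 1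

/-- `Δ` is an `n`-gon (cycle) as a 1-dimensional complex. -/
def IsNGon (Δ : Set (Set α)) (n : ℕ) : Prop :=
  3 ≤ n ∧ ∃ v : ℕ → α, (∀ i j, i < n → j < n → v i = v j → i = j) ∧
    Δ = {s | s = ∅ ∨ (∃ i < n, s = {v i}) ∨ ∃ i < n, s = {v i, v ((i + 1) % n)}}

/-- `Δ` is a path on `m` vertices as a simplicial complex. -/
def IsPathComplex (Δ : Set (Set α)) (m : ℕ) : Prop :=
  1 ≤ m ∧ ∃ v : ℕ → α, (∀ i j, i < m → j < m → v i = v j → i = j) ∧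
    Δ = {s | s = ∅ ∨ (∃ i < m, s = {v i}) ∨ ∃ i, i + 1 < m ∧ s = {v i, v (i + 1)}}

/-- The h-polynomial `h(t) = f(t-1)` of a complex with prescribed rank `r`,
where `f(t) = ∑ fᵢ t^{r-i}`. -/
noncomputable def hPoly (Δ : Set (Set α)) (r : ℕ) : Polynomial ℤ :=
  ∑ i ∈ Finset.range (r + 1),
    Polynomial.C (({s ∈ Δ | s.ncard = i}.ncard : ℤ)) * (X - 1) ^ (r - i)

/-- The `i`-th entry of the h-vector: the coefficient of `t^{r-i}` in the h-polynomial. -/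
noncomputable def hVec (Δ : Set (Set α)) (r i : ℕ) : ℤ := (hPoly Δ r).coeff (r - i)

/-- The rank of a matroid, as the cardinality of some base. -/
noncomputable def rk (M : Matroid α) : ℕ := M.exists_isBase.choose.ncard

/-- A simple matroid: every circuit has at least 3 elements. -/
def MSimple (M : Matroid α) : Prop := ∀ C, MCircuit M C → 3 ≤ C.ncard

/-- A connected matroid: any two distinct elements lie on a common circuit. -/
def MConnected (M : Matroid α) : Prop :=
  M.E.Nonempty ∧ ∀ e ∈ M.E, ∀ f ∈ M.E, e ≠ f → ∃ C, MCircuit M C ∧ e ∈ C ∧ f ∈ C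

def MLoop (M : Matroid α) (e : α) : Prop := e ∈ M.E ∧ ¬ M.Indep {e}

def MColoop (M : Matroid α) (e : α) : Prop := e ∈ M.E ∧ ∀ B, M.IsBase B → e ∈ B

/-- `M` is the parallel connection of `M₁` and `M₂` relative to `e`,
characterized by its set of circuits. -/
def IsParallelConn (M M₁ M₂ : Matroid α) (e : α) : Prop :=
  M₁.E ∩ M₂.E = {e} ∧ M.E = M₁.E ∪ M₂.E ∧
  ¬ MLoop M₁ e ∧ ¬ MColoop M₁ e ∧ ¬ MLoop M₂ e ∧ ¬ MColoop M₂ e ∧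
  ∀ C, MCircuit M C ↔ (MCircuit M₁ C ∨ MCircuit M₂ C ∨
    ∃ C₁ C₂, MCircuit M₁ C₁ ∧ MCircuit M₂ C₂ ∧ e ∈ C₁ ∧ e ∈ C₂ ∧ C = (C₁ ∪ C₂) \ {e})

/-- `M` is the series connection of `M₁` and `M₂` relative to `e`,
characterized by its set of circuits. -/
def IsSeriesConn (M M₁ M₂ : Matroid α) (e : α) : Prop :=
  M₁.E ∩ M₂.E = {e} ∧ M.E = M₁.E ∪ M₂.E ∧
  ¬ MLoop M₁ e ∧ ¬ MColoop M₁ e ∧ ¬ MLoop M₂ e ∧ ¬ MColoop M₂ e ∧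
  ∀ C, MCircuit M C ↔ ((MCircuit M₁ C ∧ e ∉ C) ∨ (MCircuit M₂ C ∧ e ∉ C) ∨
    ∃ C₁ C₂, MCircuit M₁ C₁ ∧ MCircuit M₂ C₂ ∧ e ∈ C₁ ∧ e ∈ C₂ ∧ C = C₁ ∪ C₂)

/-- Contraction of a single element, via duality: `M/e = (M* − e)*`. -/
noncomputable def contractElem (M : Matroid α) (e : α) : Matroid α :=
  (M✶ ↾ (M.E \ {e}))✶

/-- `N` is a simplification of `M`: a simple restriction of `M` to a set meeting
every parallel class of non-loops. -/
def IsSimplificationOf (N M : Matroid α) : Prop :=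
  ∃ S ⊆ M.E, N = M ↾ S ∧ MSimple N ∧
    ∀ x ∈ M.E, M.Indep {x} → ∃ y ∈ S, x = y ∨ MCircuit M {x, y}

/-- `M` is (a copy of) the uniform matroid `U_{m,m+1}`. -/
def IsUnifNearCircuit (M : Matroid α) (m : ℕ) : Prop :=
  M.E.ncard = m + 1 ∧ ∀ I, M.Indep I ↔ I ⊆ M.E ∧ I.ncard ≤ m

/-- The minimal broken circuits of an ordered matroid. -/
def MinBrokenCircuit (r : α → α → Prop) (M : Matroid α) (B : Set α) : Prop :=
  BrokenCircuit r M B ∧ ∀ B', BrokenCircuit r M B' → B' ⊆ B → B' = B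

/-- A (nonempty) connected component of a matroid: a circuit-closed subset of the
ground set on which the restriction is connected. -/
def IsComponent (M : Matroid α) (S : Set α) : Prop :=
  S ⊆ M.E ∧ S.Nonempty ∧ MConnected (M ↾ S) ∧
    ∀ C, MCircuit M C → C ⊆ S ∨ Disjoint C S

/-- Series-parallel networks: matroids obtained from a two-element circuit by
iterated series and parallel connections. -/
inductive IsSPNetwork : Matroid α → Prop
  | twoCircuit (M : Matroid α) (h1 : M.E.ncard = 2) (h2 : MCircuit M M.E) : IsSPNetwork M
  | series (M N P : Matroid α) (e : α) (h1 : P.E.ncard = 2) (h2 : MCircuit P P.E)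
      (hN : IsSPNetwork N) (h : IsSeriesConn M N P e) : IsSPNetwork M
  | parallel (M N P : Matroid α) (e : α) (h1 : P.E.ncard = 2) (h2 : MCircuit P P.E)
      (hN : IsSPNetwork N) (h : IsParallelConn M N P e) : IsSPNetwork M

/-- Iterated parallel connections of uniform matroids `U_{m,m+1}`, `m ≥ 2`. -/
inductive IsIterParallelUnif : Matroid α → Prop
  | unif (M : Matroid α) (m : ℕ) (h2 : 2 ≤ m) (h : IsUnifNearCircuit M m) :
      IsIterParallelUnif M
  | parallel (M N P : Matroid α) (e : α) (m : ℕ) (h2 : 2 ≤ m)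
      (hN : IsIterParallelUnif N) (hP : IsUnifNearCircuit P m)
      (h : IsParallelConn M N P e) : IsIterParallelUnif M

/-- `M` is graphic: its circuits are the edge sets of cycles of some graph. -/
def IsGraphic (M : Matroid α) : Prop :=
  ∃ (V : Type) (G : SimpleGraph V) (f : α → Sym2 V),
    Set.InjOn f M.E ∧ (∀ a ∈ M.E, f a ∈ G.edgeSet) ∧
    ∀ C, MCircuit M C ↔ C ⊆ M.E ∧
      ∃ (u : V) (w : G.Walk u u), w.IsCycle ∧ f '' C = {x | x ∈ w.edges}

/-- A minimal non-face of a complex. -/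
def MinNonFace (Δ : Set (Set α)) (s : Set α) : Prop :=
  s ⊆ vertexSet Δ ∧ s ∉ Δ ∧ ∀ t, t ⊂ s → t ∈ Δ

/-- A complete intersection complex: the minimal non-faces are pairwise disjoint
(equivalently, the Stanley–Reisner ring is a complete intersection). -/
def IsCIComplex (Δ : Set (Set α)) : Prop :=
  ∀ s t, MinNonFace Δ s → MinNonFace Δ t → s ≠ t → Disjoint s t

/-- The Stanley–Reisner ring of a complex over a field `K`. -/
abbrev SRRing (K : Type) [Field K] (Δ : Set (Set α)) :=
  MvPolynomial (vertexSet Δ) K ⧸ (Ideal.span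
    {m : MvPolynomial (vertexSet Δ) K | ∃ s : Finset (vertexSet Δ),
      (Subtype.val '' (s : Set (vertexSet Δ))) ∉ Δ ∧ m = ∏ i ∈ s, MvPolynomial.X i})

/-- A Gorenstein ring: Noetherian with finite self-injective dimension
(expressed by eventual vanishing of `Ext^i(—, R)`). -/
def IsGorensteinRing (R : Type u) [CommRing R] : Prop :=
  IsNoetherianRing R ∧ ∃ n : ℕ, ∀ (M : ModuleCat.{u} R) (i : ℕ), n < i →
    Subsingleton (((Ext R (ModuleCat.{u} R) i).obj (Opposite.op M)).obj (ModuleCat.of R R))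


private lemma exists_mcircuit {M : Matroid α} {D : Set α} (hfin : D.Finite) (hDE : D ⊆ M.E)
    (hdep : ¬ M.Indep D) : ∃ C ⊆ D, MCircuit M C := by
  by_cases h : ∀ D', D' ⊂ D → M.Indep D'
  · exact ⟨D, subset_rfl, hdep, hDE, h⟩
  · push_neg at h
    obtain ⟨D', hD'sub, hD'dep⟩ := h
    obtain ⟨C, hCD, hC⟩ :=
      exists_mcircuit (hfin.subset hD'sub.subset) (hD'sub.subset.trans hDE) hD'dep
    exact ⟨C, hCD.trans hD'sub.subset, hC⟩
termination_by D.ncard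
decreasing_by exact Set.ncard_lt_ncard hD'sub hfin

private lemma mcircuit_elim {M : Matroid α} {C C' : Set α} (hfinC : C.Finite) (hfinC' : C'.Finite)
    (hC : MCircuit M C) (hC' : MCircuit M C') (hne : C ≠ C') {u : α} (huC : u ∈ C)
    (huC' : u ∈ C') : ¬ M.Indep ((C ∪ C') \ {u}) := by
  intro hJ
  have hCE := hC.2.1
  have hC'E := hC'.2.1
  have hXE : C ∪ C' ⊆ M.E := union_subset hCE hC'E
  have hXfin : (C ∪ C').Finite := hfinC.union hfinC'
  -- pick f ∈ C \ C'
  obtain ⟨f, hfC, hfC'⟩ : ∃ f ∈ C, f ∉ C' := by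
    by_contra! h
    exact hC.1 (hC'.2.2 C ⟨h, fun hCC' => hne (Set.Subset.antisymm h hCC')⟩)
  have hI0 : M.Indep (C \ {f}) := hC.2.2 _ ⟨diff_subset, fun h => (h hfC).2 rfl⟩
  obtain ⟨I, hI, hI0I⟩ := hI0.subset_isBasis_of_subset
    (diff_subset.trans subset_union_left) hXE
  have hfI : f ∉ I := by
    intro hfI
    exact hC.1 (hI.indep.subset (by
      intro x hx
      rcases eq_or_ne x f with rfl | hxf
      · exact hfI
      · exact hI0I ⟨hx, hxf⟩))
  obtain ⟨g, hgC', hgI⟩ : ∃ g ∈ C', g ∉ I := by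
    by_contra! h
    exact hC'.1 (hI.indep.subset h)
  have hgf : g ≠ f := fun h => hfC' (h ▸ hgC')
  have hguf : u ≠ f := fun h => hfC' (h ▸ huC')
  have huI : u ∈ I := hI0I ⟨huC, hguf⟩
  have hgu : g ≠ u := fun h => hgI (h ▸ huI)
  obtain ⟨J', hJ', hJJ'⟩ := hJ.subset_isBasis_of_subset
    (diff_subset : (C ∪ C') \ {u} ⊆ C ∪ C') hXE
  have hcard : I.encard = J'.encard := hI.encard_eq_encard hJ'
  have hIfin : I.Finite := hXfin.subset hI.subset
  have hJ'fin : J'.Finite := hXfin.subset hJ'.subset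
  have hncard : I.ncard = J'.ncard := by
    rw [Set.ncard_def, Set.ncard_def, hcard]
  have hIsub : I ⊆ (C ∪ C') \ {f, g} := by
    intro x hx
    refine ⟨hI.subset hx, ?_⟩
    rintro (rfl | rfl)
    · exact hfI hx
    · exact hgI hx
  have h1 : ((C ∪ C') \ {u}).ncard ≤ I.ncard := by
    rw [hncard]
    exact Set.ncard_le_ncard hJJ' hJ'fin
  have h2 : I.ncard ≤ ((C ∪ C') \ ({f, g} : Set α)).ncard :=
    Set.ncard_le_ncard hIsub hXfin.diff
  have hfgsub : ({f, g} : Set α) ⊆ C ∪ C' := by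
    rintro x (rfl | rfl)
    · exact Or.inl hfC
    · exact Or.inr hgC'
  have h3 : ((C ∪ C') \ ({f, g} : Set α)).ncard = (C ∪ C').ncard - 2 := by
    rw [Set.ncard_diff hfgsub (Set.toFinite _), Set.ncard_pair hgf.symm]
  have h4 : ((C ∪ C') \ ({u} : Set α)).ncard = (C ∪ C').ncard - 1 := by
    rw [Set.ncard_diff (singleton_subset_iff.2 (Set.mem_union_left _ huC)) (Set.toFinite _), Set.ncard_singleton]
  have h5 : 2 ≤ (C ∪ C').ncard := by
    calc 2 = ({f, g} : Set α).ncard := (Set.ncard_pair hgf.symm).symm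
    _ ≤ (C ∪ C').ncard := Set.ncard_le_ncard hfgsub hXfin
  omega

/-- Lemma 3.3 of the paper. -/
theorem brokenCircuit_link_vertex_min {α : Type*} [LinearOrder α] (M : Matroid α)
    (hfin : M.E.Finite) (F : Set α) (hF : F ∈ BCC (· ≤ ·) M)
    (V₁ V₂ : Set α)
    (hV₁ : V₁ = vertexSet (linkOf (BCC (· ≤ ·) M) F))
    (hV₂ : V₂ = vertexSet (linkOf (IndepComplex M) F))
    (hne : (V₂ \ V₁).Nonempty) :
    ∃ u ∈ V₁, ∀ v ∈ V₂ \ V₁, u < v := by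
  -- membership characterizations
  have memV₂ : ∀ v, v ∈ V₂ ↔ M.Indep (F ∪ {v}) ∧ v ∉ F := by
    intro v
    simp [hV₂, vertexSet, linkOf, IndepComplex, Set.disjoint_singleton_right]
  have memV₁ : ∀ v, v ∈ V₁ ↔ (F ∪ {v} ∈ BCC (· ≤ ·) M) ∧ v ∉ F := by
    intro v
    simp [hV₁, vertexSet, linkOf, Set.disjoint_singleton_right]
  have keyBC : ∀ v ∈ V₂ \ V₁, ∃ B, BrokenCircuit (· ≤ ·) M B ∧ B ⊆ F ∪ {v} := by
    intro v hv
    obtain ⟨hv2, hv1⟩ := hv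
    rw [memV₂] at hv2
    rw [memV₁] at hv1
    have hnb : F ∪ {v} ∉ BCC (· ≤ ·) M := fun h => hv1 ⟨h, hv2.2⟩
    have hsub : F ∪ {v} ⊆ M.E := hv2.1.subset_ground
    simp only [BCC, Set.mem_setOf_eq, not_and, not_forall, not_not] at hnb
    obtain ⟨B, hB, hBsub⟩ := hnb hsub
    exact ⟨B, hB, hBsub⟩
  classical
  set T : Set α := {e | ∃ C v, v ∈ V₂ \ V₁ ∧ MCircuit M C ∧ e ∈ C ∧ (∀ x ∈ C, e ≤ x) ∧
    C \ {e} ⊆ F ∪ {v}} with hT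
  have hTE : T ⊆ M.E := by
    rintro e ⟨C, v, _, hC, heC, -, -⟩
    exact hC.2.1 heC
  have hTfin : T.Finite := hfin.subset hTE
  have hTne : T.Nonempty := by
    obtain ⟨v, hv⟩ := hne
    obtain ⟨B, ⟨C, e, hC, heC, hemin, rfl⟩, hBsub⟩ := keyBC v hv
    exact ⟨e, C, v, hv, hC, heC, hemin, hBsub⟩
  obtain ⟨u, huT, humin⟩ := Set.exists_min_image T id hTfin hTne
  obtain ⟨C, v, hvW, hC, huC, humC, hCsub⟩ := huT
  have hvindep : M.Indep (F ∪ {v}) := ((memV₂ v).1 hvW.1).1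
  have hFE : F ⊆ M.E := hF.1
  have huF : u ∉ F := by
    intro huF
    apply hC.1
    apply hvindep.subset
    intro x hx
    rcases eq_or_ne x u with rfl | hxu
    · exact Or.inl huF
    · exact hCsub ⟨hx, hxu⟩
  have huV₁ : u ∈ V₁ := by
    rw [memV₁]
    refine ⟨⟨union_subset hFE (singleton_subset_iff.2 (hC.2.1 huC)), ?_⟩, huF⟩
    rintro B ⟨C', e', hC', he'C', he'min, rfl⟩ hB'sub
    have huB' : u ∈ C' \ {e'} := by
      by_contra huB'
      refine hF.2 _ ⟨C', e', hC', he'C', he'min, rfl⟩ ?_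
      intro x hx
      rcases hB'sub hx with hxF | hxu
      · exact hxF
      · exact absurd (hxu ▸ hx) huB'
    have huC' : u ∈ C' := huB'.1
    have hue' : u ≠ e' := huB'.2
    have he'u : e' < u := lt_of_le_of_ne (he'min u huC') (fun h => hue' h.symm)
    have he'C : e' ∉ C := fun h => absurd (humC e' h) (not_le.2 he'u)
    have hCne : C ≠ C' := fun h => he'C (h ▸ he'C')
    have hdep := mcircuit_elim (hfin.subset hC.2.1) (hfin.subset hC'.2.1) hC hC' hCne huC huC'
    obtain ⟨C'', hC''sub, hC''⟩ := exists_mcircuit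
      ((hfin.subset hC.2.1).union (hfin.subset hC'.2.1) |>.subset diff_subset)
      (diff_subset.trans (union_subset hC.2.1 hC'.2.1)) hdep
    have hC''mem : ∀ x ∈ C'', x = e' ∨ x ∈ F ∪ {v} := by
      intro x hx
      obtain ⟨hx1, hx2⟩ := hC''sub hx
      simp only [Set.mem_singleton_iff] at hx2
      rcases hx1 with hxC | hxC'
      · exact Or.inr (hCsub ⟨hxC, hx2⟩)
      · rcases eq_or_ne x e' with rfl | hxe'
        · exact Or.inl rfl
        · rcases hB'sub ⟨hxC', hxe'⟩ with hxF | hxu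
          · exact Or.inr (Or.inl hxF)
          · exact absurd hxu hx2
    by_cases he'C'' : e' ∈ C''
    · -- e' is the least element of C'', giving a smaller candidate
      have he'min'' : ∀ x ∈ C'', e' ≤ x := by
        intro x hx
        rcases (hC''sub hx).1 with hxC | hxC'
        · exact le_of_lt (lt_of_lt_of_le he'u (humC x hxC))
        · exact he'min x hxC'
      have : e' ∈ T := by
        refine ⟨C'', v, hvW, hC'', he'C'', he'min'', ?_⟩
        intro x hx
        rcases hC''mem x hx.1 with rfl | h
        · exact absurd rfl hx.2
        · exact h
      exact absurd (humin e' this) (not_le.2 he'u)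
    · -- C'' ⊆ F ∪ {v}, contradicting independence
      apply hC''.1
      apply hvindep.subset
      intro x hx
      rcases hC''mem x hx with rfl | h
      · exact absurd hx he'C''
      · exact h
  refine ⟨u, huV₁, ?_⟩
  intro w hw
  obtain ⟨B, ⟨Cw, ew, hCw, hewCw, hewmin, rfl⟩, hBsub⟩ := keyBC w hw
  have hewT : ew ∈ T := ⟨Cw, w, hw, hCw, hewCw, hewmin, hBsub⟩
  have hwB : w ∈ Cw \ {ew} := by
    by_contra hwB
    refine hF.2 _ ⟨Cw, ew, hCw, hewCw, hewmin, rfl⟩ ?_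
    intro x hx
    rcases hBsub hx with hxF | hxw
    · exact hxF
    · exact absurd (hxw ▸ hx) hwB
  have : ew < w := lt_of_le_of_ne (hewmin w hwB.1) (fun h => hwB.2 h.symm)
  exact lt_of_le_of_lt (humin ew hewT) this
end PaperBC
end

section
/- Let Δ be the broken circuit complex of an ordered matroid (M,<) with dim Δ ≥ 1. If F is a face of Δ such that link_Δ F is an n-gon (an n-cycle graph, viewed as a 1-dimensional simplicial complex), then n ≤ 4. -/
open Set Polynomial Matroid CategoryTheory

universe u

namespace PaperBC

variable {α : Type*}

lemma exists_mcircuit_subset (M : Matroid α) (hfin : M.E.Finite) :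
    ∀ n (X : Set α), X ⊆ M.E → ¬ M.Indep X → X.ncard ≤ n → ∃ C, C ⊆ X ∧ MCircuit M C := by
  intro n
  induction n with
  | zero =>
    intro X hXE hX hc
    have hXfin : X.Finite := hfin.subset hXE
    have : X = ∅ := by
      rw [← Set.ncard_eq_zero hXfin]; omega
    exact absurd (this ▸ M.empty_indep) hX
  | succ n ih =>
    intro X hXE hX hc
    by_cases h : ∀ D, D ⊂ X → M.Indep D
    · exact ⟨X, subset_rfl, hX, hXE, h⟩
    · push_neg at h
      obtain ⟨D, hDX, hD⟩ := h
      have hXfin : X.Finite := hfin.subset hXE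
      have hlt : D.ncard < X.ncard := Set.ncard_lt_ncard hDX hXfin
      obtain ⟨C, hCD, hC⟩ := ih D (hDX.subset.trans hXE) hD (by omega)
      exact ⟨C, hCD.trans hDX.subset, hC⟩


lemma MCircuit.diff_indep {M : Matroid α} {C : Set α} (hC : MCircuit M C) {e : α} (he : e ∈ C) :
    M.Indep (C \ {e}) :=
  hC.2.2 _ (Set.sdiff_singleton_ssubset.mpr he)

lemma MCircuit.mem_closure_diff {M : Matroid α} {C : Set α} (hC : MCircuit M C) {e : α}
    (he : e ∈ C) : e ∈ M.closure (C \ {e}) := by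
  have hI := hC.diff_indep he
  have hins : insert e (C \ {e}) = C := Set.insert_diff_singleton.trans (Set.insert_eq_of_mem he)
  by_contra hcl
  have : M.Indep (insert e (C \ {e})) :=
    (hI.insert_indep_iff_of_notMem (fun h => h.2 rfl)).mpr ⟨hC.2.1 he, hcl⟩
  rw [hins] at this
  exact hC.1 this

lemma mcircuit_elimination {M : Matroid α} {C₁ C₂ : Set α} (h₁ : MCircuit M C₁)
    (h₂ : MCircuit M C₂) (hne : C₁ ≠ C₂) {e : α} (he₁ : e ∈ C₁) (he₂ : e ∈ C₂) :
    ¬ M.Indep ((C₁ ∪ C₂) \ {e}) := by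
  intro hX
  set X := (C₁ ∪ C₂) \ {e} with hXdef
  obtain ⟨f, hf₁, hf₂⟩ : ∃ f, f ∈ C₁ ∧ f ∉ C₂ := by
    by_contra h
    push_neg at h
    rcases eq_or_ne C₁ C₂ with h' | h'
    · exact hne h'
    · exact h₁.1 (h₂.2.2 _ (ssubset_of_subset_of_ne h h'))
  have hfe : f ≠ e := fun h => hf₂ (h ▸ he₂)
  have hfX : f ∈ X := ⟨Or.inl hf₁, hfe⟩
  -- e ∈ closure (X \ {f})
  have hC₂sub : C₂ \ {e} ⊆ X \ {f} := by
    intro a ha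
    exact ⟨⟨Or.inr ha.1, ha.2⟩, fun h => hf₂ (h ▸ ha.1)⟩
  have hecl : e ∈ M.closure (X \ {f}) :=
    M.closure_subset_closure hC₂sub (h₂.mem_closure_diff he₂)
  have hC₁sub : C₁ \ {f} ⊆ insert e (X \ {f}) := by
    intro a ha
    rcases eq_or_ne a e with rfl | hae
    · exact mem_insert _ _
    · exact Or.inr ⟨⟨Or.inl ha.1, hae⟩, ha.2⟩
  have hfcl : f ∈ M.closure (X \ {f}) := by
    have h1 : f ∈ M.closure (C₁ \ {f}) := h₁.mem_closure_diff hf₁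
    have h2 : M.closure (C₁ \ {f}) ⊆ M.closure (insert e (X \ {f})) :=
      M.closure_subset_closure hC₁sub
    have h3 : M.closure (insert e (X \ {f})) = M.closure (X \ {f}) :=
      Matroid.closure_insert_eq_of_mem_closure hecl
    exact h3 ▸ h2 h1
  have hXf : M.Indep (X \ {f}) := hX.subset diff_subset
  have : M.Indep (insert f (X \ {f})) := by
    rw [Set.insert_diff_singleton, Set.insert_eq_of_mem hfX]
    exact hX
  rw [hXf.insert_indep_iff_of_notMem (fun h => h.2 rfl)] at this
  exact this.2 hfcl


lemma face_indep [LinearOrder α] {M : Matroid α} (hfin : M.E.Finite) {G : Set α}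
    (hG : G ∈ BCC (· ≤ ·) M) : M.Indep G := by
  by_contra h
  obtain ⟨C, hCG, hC⟩ := exists_mcircuit_subset M hfin G.ncard G hG.1 h le_rfl
  have hCne : C.Nonempty := by
    rcases C.eq_empty_or_nonempty with rfl | h'
    · exact absurd M.empty_indep hC.1
    · exact h'
  obtain ⟨e, heC, hemin⟩ := Set.exists_min_image C id (hfin.subset (hC.2.1.trans subset_rfl)) hCne
  exact hG.2 (C \ {e}) ⟨C, e, hC, heC, hemin, rfl⟩ (diff_subset.trans hCG)


set_option maxHeartbeats 1000000 in
/-- Lemma 3.4 of the paper. -/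
theorem ngon_link_of_brokenCircuitComplex {α : Type*} [LinearOrder α] (M : Matroid α)
    (hfin : M.E.Finite) (hdim : ∃ s ∈ BCC (· ≤ ·) M, s.ncard = 2)
    (F : Set α) (hF : F ∈ BCC (· ≤ ·) M) (n : ℕ)
    (hgon : IsNGon (linkOf (BCC (· ≤ ·) M) F) n) :
    n ≤ 4 := by
  by_contra hn4
  have hnpos : 0 < n := by omega
  obtain ⟨hn3, v, hinj, hlk⟩ := hgon
  have hmod_lt : ∀ i : ℕ, i % n < n := fun i => Nat.mod_lt _ hnpos
  -- modular arithmetic helper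
  have hdvd : ∀ a b : ℕ, (a + b) % n = a % n → n ∣ b := by
    intro a b h
    have h1 : a % n = (a + b) % n := h.symm
    have h2 : (n:ℕ) ∣ (a + b) - a := (Nat.modEq_iff_dvd' (Nat.le_add_right a b)).mp h1
    simpa using h2
  have hFE : F ⊆ M.E := hF.1
  have hFind : M.Indep F := face_indep hfin hF
  -- vertex facts
  have hvert : ∀ i, i < n → ({v i} : Set α) ∈ linkOf (BCC (· ≤ ·) M) F := by
    intro i hi; rw [hlk]; exact Or.inr (Or.inl ⟨i, hi, rfl⟩)
  have hvF : ∀ i, i < n → v i ∉ F := fun i hi =>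
    Set.disjoint_singleton_right.mp (hvert i hi).2
  have hvΔ : ∀ i, i < n → F ∪ {v i} ∈ BCC (· ≤ ·) M := fun i hi => (hvert i hi).1
  have hvE : ∀ i, i < n → v i ∈ M.E := fun i hi => (hvΔ i hi).1 (Or.inr rfl)
  have hvind : ∀ i, i < n → M.Indep (insert (v i) F) := by
    intro i hi
    have := face_indep hfin (hvΔ i hi)
    rwa [union_singleton] at this
  -- the minimal "free" element x
  set S : Set α := {y | y ∈ M.E ∧ y ∉ F ∧ M.Indep (insert y F)} with hSdef
  have hSfin : S.Finite := hfin.subset (fun y hy => hy.1)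
  have hSne : S.Nonempty := ⟨v 0, hvE 0 hnpos, hvF 0 hnpos, hvind 0 hnpos⟩
  obtain ⟨x, hxS, hxmin⟩ := Set.exists_min_image S id hSfin hSne
  have hP : ∀ y, y ∈ M.E → y < x → y ∉ F → ¬ M.Indep (insert y F) := by
    intro y hyE hyx hyF hind
    exact absurd (hxmin y ⟨hyE, hyF, hind⟩) (by simpa using hyx.not_ge)
  -- the key dichotomy
  have key : ∀ G : Set α, F ∪ G ∈ BCC (· ≤ ·) M → (insert x (F ∪ G) ∈ BCC (· ≤ ·) M) ∨
      ¬ M.Indep (insert x (F ∪ G)) := by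
    intro G hFG
    by_cases hmem : insert x (F ∪ G) ∈ BCC (· ≤ ·) M
    · exact Or.inl hmem
    right
    intro hind
    have hsubE : insert x (F ∪ G) ⊆ M.E := insert_subset hxS.1 hFG.1
    have hB : ∃ B, BrokenCircuit (· ≤ ·) M B ∧ B ⊆ insert x (F ∪ G) := by
      by_contra h; push_neg at h
      exact hmem ⟨hsubE, fun B hB hsub => h B hB hsub⟩
    obtain ⟨B, ⟨C, e, hC, heC, hemin, rfl⟩, hsub⟩ := hB
    have hxB : x ∈ C \ {e} := by
      by_contra hx
      exact hFG.2 _ ⟨C, e, hC, heC, hemin, rfl⟩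
        (fun a ha => (hsub ha).resolve_left (fun h => hx (h ▸ ha)))
    have hex : e < x :=
      lt_of_le_of_ne (hemin x hxB.1) (fun h => hxB.2 (mem_singleton_iff.mpr h.symm))
    have heE : e ∈ M.E := hC.2.1 heC
    by_cases heF : e ∈ F
    · have hCsub : C ⊆ insert x (F ∪ G) := by
        intro a ha
        rcases eq_or_ne a e with rfl | hae
        · exact Or.inr (Or.inl heF)
        · exact hsub ⟨ha, hae⟩
      exact hC.1 (hind.subset hCsub)
    · obtain ⟨C₀, hC₀sub, hC₀⟩ := exists_mcircuit_subset M hfin (insert e F).ncard _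
        (insert_subset heE hFE) (hP e heE hex heF) le_rfl
      have heC₀ : e ∈ C₀ := by
        by_contra h
        have hsub' : C₀ ⊆ F := fun a ha => (hC₀sub ha).resolve_left (fun h' => h (h' ▸ ha))
        exact hC₀.1 (hFind.subset hsub')
      have hCne : C ≠ C₀ := by
        rintro rfl
        have hsub' : C \ {e} ⊆ F := fun a ha =>
          (hC₀sub ha.1).resolve_left (fun h' => ha.2 (mem_singleton_iff.mpr h'))
        exact hF.2 _ ⟨C, e, hC, heC, hemin, rfl⟩ hsub'
      refine mcircuit_elimination hC hC₀ hCne heC heC₀ (hind.subset ?_)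
      intro a ha
      rcases ha.1 with h | h
      · exact hsub ⟨h, ha.2⟩
      · exact Or.inr (Or.inl ((hC₀sub h).resolve_left
          (fun h' => ha.2 (mem_singleton_iff.mpr h'))))
  -- step 1 : x is a vertex of the n-gon
  have hx1 := key ∅ (by rwa [union_empty])
  rw [union_empty] at hx1
  have hxface : insert x F ∈ BCC (· ≤ ·) M := hx1.resolve_right (fun h => h hxS.2.2)
  have hxlk : ({x} : Set α) ∈ linkOf (BCC (· ≤ ·) M) F :=
    ⟨by rwa [union_singleton], disjoint_singleton_right.mpr hxS.2.1⟩
  rw [hlk] at hxlk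
  obtain h | ⟨t, ht, hxt⟩ | ⟨i, hi, hxe⟩ := hxlk
  · exact absurd h (singleton_ne_empty x)
  swap
  · have h1 : v i ∈ ({x} : Set α) := by rw [hxe]; exact mem_insert _ _
    have h2 : v ((i+1) % n) ∈ ({x} : Set α) := by
      rw [hxe]; exact mem_insert_of_mem _ rfl
    have h3 : i = (i+1) % n :=
      hinj _ _ hi (hmod_lt _) ((mem_singleton_iff.mp h1).trans (mem_singleton_iff.mp h2).symm)
    have h4 : n ∣ 1 := hdvd i 1 (by rw [← h3, Nat.mod_eq_of_lt hi])
    have := Nat.le_of_dvd one_pos h4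
    omega
  have hxv : x = v t := mem_singleton_iff.mp (hxt ▸ rfl : x ∈ ({v t} : Set α))
  -- indices
  set s₁ : ℕ := (t + 2) % n with hs₁def
  set s₂ : ℕ := (t + 3) % n with hs₂def
  have hs₁lt : s₁ < n := hmod_lt _
  have hs₂lt : s₂ < n := hmod_lt _
  have htmod : t % n = t := Nat.mod_eq_of_lt ht
  have hs₁s₂ : (s₁ + 1) % n = s₂ := by
    rw [hs₁def, hs₂def, Nat.mod_add_mod]
  have hndvd : ∀ b, 0 < b → b ≤ 4 → ¬ n ∣ b := by
    intro b hb hb4 hdd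
    have := Nat.le_of_dvd hb hdd
    omega
  have hs₁t : s₁ ≠ t := fun h => hndvd 2 (by omega) (by omega) (hdvd t 2 (by rw [htmod]; exact h))
  have hs₂t : s₂ ≠ t := fun h => hndvd 3 (by omega) (by omega) (hdvd t 3 (by rw [htmod]; exact h))
  have hs₁s₂ne : s₁ ≠ s₂ := by
    intro h
    refine hndvd 1 (by omega) (by omega) (hdvd (t + 2) 1 ?_)
    show (t + 2 + 1) % n = (t + 2) % n
    rw [show t + 2 + 1 = t + 3 from rfl]
    exact h.symm
  -- non-adjacency of s₁, s₂ with t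
  have hnadj : ∀ s' k, s' = (t + k) % n → 2 ≤ k → k ≤ 3 →
      ({v s', x} : Set α) ∉ linkOf (BCC (· ≤ ·) M) F := by
    intro s' k hs' hk2 hk3 hmem
    rw [hlk] at hmem
    have hs'lt : s' < n := hs' ▸ hmod_lt _
    have hs't : s' ≠ t := by
      intro h
      exact hndvd k (by omega) (by omega) (hdvd t k (by rw [htmod, ← hs', h]))
    have hvs'x : v s' ≠ x := fun h => hs't (hinj _ _ hs'lt ht (h.trans hxv))
    obtain h | ⟨i, hi, hpair⟩ | ⟨i, hi, hpair⟩ := hmem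
    · exact absurd h (Set.insert_nonempty _ _).ne_empty
    · have h1 : v s' ∈ ({v i} : Set α) := by rw [← hpair]; exact mem_insert _ _
      have h2 : x ∈ ({v i} : Set α) := by rw [← hpair]; exact mem_insert_of_mem _ rfl
      exact hvs'x ((mem_singleton_iff.mp h1).trans (mem_singleton_iff.mp h2).symm)
    · rw [hxv] at hpair
      rcases Set.pair_eq_pair_iff.mp hpair with ⟨ha, hb⟩ | ⟨ha, hb⟩
      · -- s' = i, t = (i+1) % n,  so t = (s' + 1) % n = (t + k + 1) % n
        have hsi : s' = i := hinj _ _ hs'lt hi ha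
        have htb : t = (i + 1) % n := hinj _ _ ht (hmod_lt _) hb
        rw [← hsi, hs'] at htb
        rw [Nat.mod_add_mod] at htb
        refine hndvd (k + 1) (by omega) (by omega) (hdvd t (k + 1) ?_)
        rw [htmod, show t + (k + 1) = t + k + 1 by omega]
        exact htb.symm
      · -- s' = (i+1) % n, t = i, so s' = (t+1) % n
        have hti : t = i := hinj _ _ ht hi hb
        have hsb : s' = (i + 1) % n := hinj _ _ hs'lt (hmod_lt _) ha
        rw [← hti] at hsb
        rw [hs'] at hsb
        -- (t + k) % n = (t + 1) % n with 2 ≤ k ≤ 3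
        refine hndvd (k - 1) (by omega) (by omega) (hdvd (t + 1) (k - 1) ?_)
        rw [show t + 1 + (k - 1) = t + k by omega]
        exact hsb
  -- dependence of the two long diagonals at x
  have hdep : ∀ s' k, s' = (t + k) % n → 2 ≤ k → k ≤ 3 →
      ¬ M.Indep (insert (v s') (insert x F)) := by
    intro s' k hs' hk2 hk3
    have hs'lt : s' < n := hs' ▸ hmod_lt _
    have hseteq : insert x (F ∪ {v s'}) = insert (v s') (insert x F) := by
      ext a; simp only [mem_insert_iff, mem_union, mem_singleton_iff]; tauto
    have h2 := key {v s'} (hvΔ s' hs'lt)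
    rcases h2 with h2 | h2
    · exfalso
      refine hnadj s' k hs' hk2 hk3 ⟨?_, ?_⟩
      · have heq2 : F ∪ ({v s', x} : Set α) = insert x (F ∪ {v s'}) := by
          ext a; simp only [mem_insert_iff, mem_union, mem_singleton_iff]; tauto
        rw [heq2]; exact h2
      · rw [Set.disjoint_right]
        intro a ha
        rcases ha with rfl | ha
        · exact hvF s' hs'lt
        · rw [mem_singleton_iff] at ha; subst ha; exact hxS.2.1
    · rwa [hseteq] at h2
  -- the closure argument
  have hxind : M.Indep (insert x F) := hxS.2.2
  have hnotmem : ∀ s' , s' < n → s' ≠ t → v s' ∉ insert x F := by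
    intro s' hs'lt hs't
    rw [mem_insert_iff]
    push_neg
    exact ⟨fun h => hs't (hinj _ _ hs'lt ht (h.trans hxv)), hvF s' hs'lt⟩
  have h1 : v s₁ ∈ M.closure (insert x F) := by
    by_contra hcl
    exact hdep s₁ 2 hs₁def (by omega) (by omega)
      ((hxind.insert_indep_iff_of_notMem (hnotmem s₁ hs₁lt hs₁t)).mpr ⟨hvE s₁ hs₁lt, hcl⟩)
  have h2 : v s₂ ∈ M.closure (insert x F) := by
    by_contra hcl
    exact hdep s₂ 3 hs₂def (by omega) (by omega)
      ((hxind.insert_indep_iff_of_notMem (hnotmem s₂ hs₂lt hs₂t)).mpr ⟨hvE s₂ hs₂lt, hcl⟩)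
  have h3 : v s₁ ∉ M.closure F :=
    ((hFind.insert_indep_iff_of_notMem (hvF s₁ hs₁lt)).mp (hvind s₁ hs₁lt)).2
  have hexch : x ∈ M.closure (insert (v s₁) F) := (Matroid.closure_exchange ⟨h1, h3⟩).1
  have hsub : insert x F ⊆ M.closure (insert (v s₁) F) := by
    apply insert_subset hexch
    have hclsub := M.subset_closure (insert (v s₁) F) (insert_subset (hvE s₁ hs₁lt) hFE)
    exact (subset_insert _ _).trans hclsub
  have h2' : v s₂ ∈ M.closure (insert (v s₁) F) :=
    Matroid.closure_subset_closure_of_subset_closure hsub h2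
  have hedge : ({v s₁, v s₂} : Set α) ∈ linkOf (BCC (· ≤ ·) M) F := by
    rw [hlk]
    exact Or.inr (Or.inr ⟨s₁, hs₁lt, by rw [hs₁s₂]⟩)
  have hedgeind : M.Indep (insert (v s₂) (insert (v s₁) F)) := by
    have hind := face_indep hfin hedge.1
    have heq : F ∪ ({v s₁, v s₂} : Set α) = insert (v s₂) (insert (v s₁) F) := by
      ext a; simp only [mem_insert_iff, mem_union, mem_singleton_iff]; tauto
    rwa [heq] at hind
  have hs₂notin : v s₂ ∉ insert (v s₁) F := by
    rw [mem_insert_iff]; push_neg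
    exact ⟨fun h => hs₁s₂ne ((hinj _ _ hs₂lt hs₁lt h).symm), hvF s₂ hs₂lt⟩
  exact (((hvind s₁ hs₁lt).insert_indep_iff_of_notMem hs₂notin).mp hedgeind).2 h2'
end PaperBC
end

section
/- Let G be a simple 2-connected graph with at least two edges whose cycle matroid M(G) is a series-parallel network (equivalently, G has no subdivision of K₄ as a subgraph). Then G has a vertex of degree 2. -/
open Set Polynomial Matroid CategoryTheory

universe u

namespace PaperBC

variable {α : Type*}

/-- `G` contains a subdivision of `K₄`: four branch vertices joined by pairwise
internally disjoint paths. -/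
def HasK4Subdivision {V : Type*} (G : SimpleGraph V) : Prop :=
  ∃ (b : Fin 4 → V) (p : ∀ _ _ : Fin 4, Σ' (x : V) (y : V), G.Walk x y),
    Function.Injective b ∧
    (∀ i j : Fin 4, i ≠ j → (p i j).1 = b i ∧ (p i j).2.1 = b j) ∧
    (∀ i j : Fin 4, i ≠ j → (p i j).2.2.IsPath) ∧
    (∀ i j : Fin 4, i ≠ j → ∀ k, b k ∈ (p i j).2.2.support → k = i ∨ k = j) ∧
    (∀ i j i' j' : Fin 4, i ≠ j → i' ≠ j' → ({i, j} : Set (Fin 4)) ≠ {i', j'} →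
      ∀ x, x ∈ (p i j).2.2.support → x ∈ (p i' j').2.2.support → x ∈ Set.range b)

section DiracSP

open SimpleGraph

variable {V : Type*}

/-- A K4-minor witness: four disjoint nonempty connected mutually adjacent vertex sets. -/
def Conn4 (G : SimpleGraph V) : Prop :=
  ∃ S : Fin 4 → Set V,
    (∀ i, (S i).Nonempty) ∧
    (∀ i j, i ≠ j → Disjoint (S i) (S j)) ∧
    (∀ i, ∀ x ∈ S i, ∀ y ∈ S i, ∃ w : G.Walk x y, ∀ z ∈ w.support, z ∈ S i) ∧
    (∀ i j, i ≠ j → ∃ x ∈ S i, ∃ y ∈ S j, G.Adj x y)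

lemma walk_firstHit {G : SimpleGraph V} {u v : V} (w : G.Walk u v) (T : Set V) (hv : v ∈ T) :
    ∃ y, y ∈ T ∧ ∃ w1 : G.Walk u y,
      (∀ z ∈ w1.support, z ∈ w.support) ∧ (∀ z ∈ w1.support, z ∈ T → z = y) ∧
      (w.IsPath → w1.IsPath) := by
  induction w with
  | @nil a =>
    refine ⟨a, hv, Walk.nil, by simp, ?_, fun h => h⟩
    intro z hz _
    simpa using hz
  | @cons a b c h t ih =>
    by_cases ha : a ∈ T
    · refine ⟨a, ha, Walk.nil, by simp, ?_, fun _ => Walk.IsPath.nil⟩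
      intro z hz _
      simpa using hz
    · obtain ⟨y, hy, w1, hsub, hfirst, hpath⟩ := ih hv
      refine ⟨y, hy, Walk.cons h w1, ?_, ?_, ?_⟩
      · intro z hz
        rw [Walk.support_cons, List.mem_cons] at hz
        rcases hz with rfl | hz
        · simp
        · rw [Walk.support_cons]
          exact List.mem_cons_of_mem _ (hsub z hz)
      · intro z hz hzT
        rw [Walk.support_cons, List.mem_cons] at hz
        rcases hz with rfl | hz
        · exact absurd hzT ha
        · exact hfirst z hz hzT
      · intro hp
        rw [Walk.cons_isPath_iff] at hp ⊢
        exact ⟨hpath hp.1, fun hc => hp.2 (hsub a hc)⟩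

lemma exists_star {G : SimpleGraph V} {S : Set V}
    (hconn : ∀ x ∈ S, ∀ y ∈ S, ∃ w : G.Walk x y, ∀ z ∈ w.support, z ∈ S)
    {t1 t2 t3 : V} (h1 : t1 ∈ S) (h2 : t2 ∈ S) (h3 : t3 ∈ S) :
    ∃ (c : V) (w1 : G.Walk c t1) (w2 : G.Walk c t2) (w3 : G.Walk c t3),
      c ∈ S ∧ w1.IsPath ∧ w2.IsPath ∧ w3.IsPath ∧
      (∀ z ∈ w1.support, z ∈ S) ∧ (∀ z ∈ w2.support, z ∈ S) ∧ (∀ z ∈ w3.support, z ∈ S) ∧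
      (∀ z, z ∈ w1.support → z ∈ w2.support → z = c) ∧
      (∀ z, z ∈ w1.support → z ∈ w3.support → z = c) ∧
      (∀ z, z ∈ w2.support → z ∈ w3.support → z = c) := by
  classical
  obtain ⟨a0, ha0⟩ := hconn t1 h1 t2 h2
  obtain ⟨b0, hb0⟩ := hconn t3 h3 t1 h1
  have hPp : a0.bypass.IsPath := a0.bypass_isPath
  have hPs : ∀ z ∈ a0.bypass.support, z ∈ S := fun z hz => ha0 z (a0.support_bypass_subset hz)
  have hQp : b0.bypass.IsPath := b0.bypass_isPath
  have hQs : ∀ z ∈ b0.bypass.support, z ∈ S := fun z hz => hb0 z (b0.support_bypass_subset hz)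
  obtain ⟨y, hyT, wa, hsub, hfirst, hpath⟩ :=
    walk_firstHit b0.bypass {z | z ∈ a0.bypass.support}
      (by simpa using a0.bypass.start_mem_support)
  have hyP : y ∈ a0.bypass.support := hyT
  have hdisj12 : ∀ z, z ∈ (a0.bypass.takeUntil y hyP).support →
      z ∈ (a0.bypass.dropUntil y hyP).support → z = y := by
    intro z hz1 hz2
    have hnd : ((a0.bypass.takeUntil y hyP).support ++
        (a0.bypass.dropUntil y hyP).support.tail).Nodup := by
      have hnd0 := hPp.support_nodup
      conv at hnd0 => rw [← Walk.take_spec a0.bypass hyP]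
      rwa [Walk.support_append] at hnd0
    have hz2' : z = y ∨ z ∈ (a0.bypass.dropUntil y hyP).support.tail := by
      have hcons := (a0.bypass.dropUntil y hyP).support_eq_cons
      rw [hcons] at hz2
      exact List.mem_cons.mp hz2
    rcases hz2' with rfl | hz2t
    · rfl
    · exact absurd hz2t (List.disjoint_of_nodup_append hnd hz1)
  refine ⟨y, (a0.bypass.takeUntil y hyP).reverse, a0.bypass.dropUntil y hyP, wa.reverse,
    hPs y hyP, (hPp.takeUntil hyP).reverse, hPp.dropUntil hyP, (hpath hQp).reverse,
    ?_, ?_, ?_, ?_, ?_, ?_⟩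
  · intro z hz
    rw [Walk.support_reverse, List.mem_reverse] at hz
    exact hPs z (a0.bypass.support_takeUntil_subset hyP hz)
  · intro z hz
    exact hPs z (a0.bypass.support_dropUntil_subset hyP hz)
  · intro z hz
    rw [Walk.support_reverse, List.mem_reverse] at hz
    exact hQs z (hsub z hz)
  · intro z hz1 hz2
    rw [Walk.support_reverse, List.mem_reverse] at hz1
    exact hdisj12 z hz1 hz2
  · intro z hz1 hz3
    rw [Walk.support_reverse, List.mem_reverse] at hz1
    rw [Walk.support_reverse, List.mem_reverse] at hz3
    exact hfirst z hz3 (a0.bypass.support_takeUntil_subset hyP hz1)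
  · intro z hz2 hz3
    rw [Walk.support_reverse, List.mem_reverse] at hz3
    exact hfirst z hz3 (a0.bypass.support_dropUntil_subset hyP hz2)

lemma walk_map_of_le {G H : SimpleGraph V} (hHG : ∀ x y, H.Adj x y → G.Adj x y)
    {x y : V} (w : H.Walk x y) : ∃ w' : G.Walk x y, w'.support = w.support := by
  induction w with
  | nil => exact ⟨Walk.nil, rfl⟩
  | cons h t ih =>
    obtain ⟨w', hw'⟩ := ih
    exact ⟨Walk.cons (hHG _ _ h) w', by simp [hw']⟩

lemma conn4_mono {G H : SimpleGraph V} (hHG : ∀ x y, H.Adj x y → G.Adj x y) :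
    Conn4 H → Conn4 G := by
  rintro ⟨S, hne, hdisj, hconn, hadj⟩
  refine ⟨S, hne, hdisj, ?_, ?_⟩
  · intro i x hx y hy
    obtain ⟨w, hw⟩ := hconn i x hx y hy
    obtain ⟨w', hw'⟩ := walk_map_of_le hHG w
    exact ⟨w', fun z hz => hw z (hw' ▸ hz)⟩
  · intro i j hij
    obtain ⟨x, hx, y, hy, hxy⟩ := hadj i j hij
    exact ⟨x, hx, y, hy, hHG _ _ hxy⟩

lemma reroute_walk {G H : SimpleGraph V} {v p q r : V}
    (hH : ∀ x y, H.Adj x y → G.Adj x y ∨ (x = p ∧ y = q) ∨ (x = q ∧ y = p) ∨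
      (x = q ∧ y = r) ∨ (x = r ∧ y = q))
    (hvp : G.Adj v p) (hvq : G.Adj v q) (hvr : G.Adj v r)
    {x y : V} (w : H.Walk x y) :
    ∃ w' : G.Walk x y, ∀ z ∈ w'.support, z ∈ w.support ∨ z = v := by
  induction w with
  | nil => exact ⟨Walk.nil, by simp⟩
  | @cons a b c h t ih =>
    obtain ⟨w', hw'⟩ := ih
    have hmem : ∀ z ∈ w'.support, z ∈ (Walk.cons h t).support ∨ z = v := by
      intro z hz
      rcases hw' z hz with hz' | hz'
      · left; rw [Walk.support_cons]; exact List.mem_cons_of_mem _ hz'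
      · right; exact hz'
    have hstart : a ∈ (Walk.cons h t).support ∨ a = v := by
      left; simp
    rcases hH _ _ h with hr | ⟨rfl, rfl⟩ | ⟨rfl, rfl⟩ | ⟨rfl, rfl⟩ | ⟨rfl, rfl⟩
    · refine ⟨Walk.cons hr w', ?_⟩
      intro z hz
      rw [Walk.support_cons, List.mem_cons] at hz
      rcases hz with rfl | hz
      · exact hstart
      · exact hmem z hz
    · refine ⟨Walk.cons hvp.symm (Walk.cons hvq w'), ?_⟩
      intro z hz
      rw [Walk.support_cons, List.mem_cons] at hz
      rcases hz with rfl | hz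
      · exact hstart
      · rw [Walk.support_cons, List.mem_cons] at hz
        rcases hz with rfl | hz
        · exact Or.inr rfl
        · exact hmem z hz
    · refine ⟨Walk.cons hvq.symm (Walk.cons hvp w'), ?_⟩
      intro z hz
      rw [Walk.support_cons, List.mem_cons] at hz
      rcases hz with rfl | hz
      · exact hstart
      · rw [Walk.support_cons, List.mem_cons] at hz
        rcases hz with rfl | hz
        · exact Or.inr rfl
        · exact hmem z hz
    · refine ⟨Walk.cons hvq.symm (Walk.cons hvr w'), ?_⟩
      intro z hz
      rw [Walk.support_cons, List.mem_cons] at hz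
      rcases hz with rfl | hz
      · exact hstart
      · rw [Walk.support_cons, List.mem_cons] at hz
        rcases hz with rfl | hz
        · exact Or.inr rfl
        · exact hmem z hz
    · refine ⟨Walk.cons hvr.symm (Walk.cons hvq w'), ?_⟩
      intro z hz
      rw [Walk.support_cons, List.mem_cons] at hz
      rcases hz with rfl | hz
      · exact hstart
      · rw [Walk.support_cons, List.mem_cons] at hz
        rcases hz with rfl | hz
        · exact Or.inr rfl
        · exact hmem z hz

lemma transfer_walk {G H : SimpleGraph V} {p q r : V}
    (hH : ∀ x y, H.Adj x y → G.Adj x y ∨ (x = p ∧ y = q) ∨ (x = q ∧ y = p) ∨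
      (x = q ∧ y = r) ∨ (x = r ∧ y = q))
    {T : Set V} (hqT : q ∉ T) {x y : V} (w : H.Walk x y)
    (hw : ∀ z ∈ w.support, z ∈ T) :
    ∃ w' : G.Walk x y, ∀ z ∈ w'.support, z ∈ w.support := by
  induction w with
  | nil => exact ⟨Walk.nil, by simp⟩
  | @cons a b c h t ih =>
    have hbt : ∀ z ∈ t.support, z ∈ T := by
      intro z hz
      exact hw z (by rw [Walk.support_cons]; exact List.mem_cons_of_mem _ hz)
    obtain ⟨w', hw'⟩ := ih hbt
    have haT : a ∈ T := hw a (by simp)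
    have hbT : b ∈ T := hbt b (by simp)
    have hreal : G.Adj a b := by
      rcases hH _ _ h with hr | ⟨rfl, rfl⟩ | ⟨rfl, rfl⟩ | ⟨rfl, rfl⟩ | ⟨rfl, rfl⟩
      · exact hr
      · exact absurd hbT hqT
      · exact absurd haT hqT
      · exact absurd haT hqT
      · exact absurd hbT hqT
    refine ⟨Walk.cons hreal w', ?_⟩
    intro z hz
    rw [Walk.support_cons, List.mem_cons] at hz
    rcases hz with rfl | hz
    · simp
    · rw [Walk.support_cons]
      exact List.mem_cons_of_mem _ (hw' z hz)

lemma conn4_lift {G H : SimpleGraph V} {v p q r : V}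
    (hH : ∀ x y, H.Adj x y → G.Adj x y ∨ (x = p ∧ y = q) ∨ (x = q ∧ y = p) ∨
      (x = q ∧ y = r) ∨ (x = r ∧ y = q))
    (hvp : G.Adj v p) (hvq : G.Adj v q) (hvr : G.Adj v r)
    (hviso : ∀ x, ¬ H.Adj v x) (h : Conn4 H) : Conn4 G := by
  classical
  obtain ⟨S, hne, hdisj, hconn, hadj⟩ := h
  have hvS : ∀ m, v ∉ S m := by
    intro m hv
    by_cases hsing : ∀ u ∈ S m, u = v
    · have hm' : ∃ m' : Fin 4, m ≠ m' := by
        by_cases h0 : m = 0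
        · exact ⟨1, by simp [h0]⟩
        · exact ⟨0, h0⟩
      obtain ⟨m', hmm'⟩ := hm'
      obtain ⟨x, hx, y, hy, hxy⟩ := hadj m m' hmm'
      rw [hsing x hx] at hxy
      exact hviso y hxy
    · push_neg at hsing
      obtain ⟨u, hu, huv⟩ := hsing
      obtain ⟨w, hw⟩ := hconn m v hv u hu
      cases w with
      | nil => exact huv rfl
      | cons h' t => exact hviso _ h'
  by_cases hq : ∃ m, q ∈ S m
  · obtain ⟨m, hqm⟩ := hq
    have hqS : ∀ k, k ≠ m → q ∉ S k := by
      intro k hk hc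
      exact absurd rfl ((hdisj k m hk).ne_of_mem hc hqm)
    refine ⟨fun k => if k = m then S m ∪ {v} else S k, ?_, ?_, ?_, ?_⟩
    · intro i
      by_cases hi : i = m <;> simp [hi, hne i, (hne m).mono subset_union_left]
    · intro i j hij
      dsimp only
      by_cases hi : i = m <;> by_cases hj : j = m
      · exact absurd (hi.trans hj.symm) hij
      · rw [if_pos hi, if_neg hj, Set.disjoint_union_left]
        refine ⟨hdisj m j (fun hc => hj hc.symm), ?_⟩
        rw [Set.disjoint_singleton_left]
        exact hvS j
      · rw [if_neg hi, if_pos hj, Set.disjoint_union_right]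
        refine ⟨hdisj i m hi, ?_⟩
        rw [Set.disjoint_singleton_right]
        exact hvS i
      · rw [if_neg hi, if_neg hj]
        exact hdisj i j hij
    · intro i x hx y hy
      dsimp only at hx hy ⊢
      by_cases hi : i = m
      · rw [if_pos hi] at hx hy ⊢
        have key : ∀ x' ∈ S m, ∃ w' : G.Walk x' q, ∀ z ∈ w'.support, z ∈ S m ∪ {v} := by
          intro x' hx'
          obtain ⟨w, hw⟩ := hconn m x' hx' q hqm
          obtain ⟨w', hw'⟩ := reroute_walk hH hvp hvq hvr w
          refine ⟨w', fun z hz => ?_⟩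
          rcases hw' z hz with hz' | rfl
          · exact Or.inl (hw z hz')
          · exact Or.inr rfl
        rcases hx with hx | hx
        · rcases hy with hy | hy
          · obtain ⟨w, hw⟩ := hconn m x hx y hy
            obtain ⟨w', hw'⟩ := reroute_walk hH hvp hvq hvr w
            refine ⟨w', fun z hz => ?_⟩
            rcases hw' z hz with hz' | rfl
            · exact Or.inl (hw z hz')
            · exact Or.inr rfl
          · rw [Set.mem_singleton_iff] at hy; subst hy
            obtain ⟨w', hw'⟩ := key x hx
            refine ⟨w'.append (Walk.cons hvq.symm Walk.nil), ?_⟩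
            intro z hz
            rw [Walk.mem_support_append_iff] at hz
            rcases hz with hz | hz
            · exact hw' z hz
            · simp only [Walk.support_cons, Walk.support_nil, List.mem_cons,
                List.not_mem_nil, or_false] at hz
              rcases hz with rfl | rfl
              · exact Or.inl hqm
              · exact Or.inr rfl
        · rw [Set.mem_singleton_iff] at hx; subst hx
          rcases hy with hy | hy
          · obtain ⟨w', hw'⟩ := key y hy
            refine ⟨(w'.append (Walk.cons hvq.symm Walk.nil)).reverse, ?_⟩
            intro z hz
            rw [Walk.support_reverse, List.mem_reverse, Walk.mem_support_append_iff] at hz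
            rcases hz with hz | hz
            · exact hw' z hz
            · simp only [Walk.support_cons, Walk.support_nil, List.mem_cons,
                List.not_mem_nil, or_false] at hz
              rcases hz with rfl | rfl
              · exact Or.inl hqm
              · exact Or.inr rfl
          · rw [Set.mem_singleton_iff] at hy; subst hy
            exact ⟨Walk.nil, by simp⟩
      · rw [if_neg hi] at hx hy ⊢
        obtain ⟨w, hw⟩ := hconn i x hx y hy
        obtain ⟨w', hw'⟩ := transfer_walk hH (hqS i hi) w hw
        exact ⟨w', fun z hz => hw z (hw' z hz)⟩
    · intro i j hij
      dsimp only
      obtain ⟨x, hx, y, hy, hxy⟩ := hadj i j hij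
      have hxS : ∀ k (z : V), z ∈ S k → z ∈ (if k = m then S m ∪ {v} else S k) := by
        intro k z hz
        by_cases hk : k = m
        · rw [if_pos hk]
          exact Or.inl (hk ▸ hz)
        · rwa [if_neg hk]
      have hvmem : ∀ k, k = m → v ∈ (if k = m then S m ∪ {v} else S k) := by
        intro k hk
        rw [if_pos hk]
        exact Or.inr rfl
      rcases hH _ _ hxy with hr | ⟨hxp, hyq⟩ | ⟨hxq, hyp⟩ | ⟨hxq, hyr⟩ | ⟨hxr, hyq⟩
      · exact ⟨x, hxS i x hx, y, hxS j y hy, hr⟩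
      · have hjm : j = m := by
          by_contra hc
          exact hqS j hc (hyq ▸ hy)
        refine ⟨x, hxS i x hx, v, hvmem j hjm, ?_⟩
        rw [hxp]
        exact hvp.symm
      · have him : i = m := by
          by_contra hc
          exact hqS i hc (hxq ▸ hx)
        refine ⟨v, hvmem i him, y, hxS j y hy, ?_⟩
        rw [hyp]
        exact hvp
      · have him : i = m := by
          by_contra hc
          exact hqS i hc (hxq ▸ hx)
        refine ⟨v, hvmem i him, y, hxS j y hy, ?_⟩
        rw [hyr]
        exact hvr
      · have hjm : j = m := by
          by_contra hc
          exact hqS j hc (hyq ▸ hy)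
        refine ⟨x, hxS i x hx, v, hvmem j hjm, ?_⟩
        rw [hxr]
        exact hvr.symm
  · push_neg at hq
    refine ⟨S, hne, hdisj, ?_, ?_⟩
    · intro i x hx y hy
      obtain ⟨w, hw⟩ := hconn i x hx y hy
      obtain ⟨w', hw'⟩ := transfer_walk hH (hq i) w hw
      exact ⟨w', fun z hz => hw z (hw' z hz)⟩
    · intro i j hij
      obtain ⟨x, hx, y, hy, hxy⟩ := hadj i j hij
      rcases hH _ _ hxy with hr | ⟨hxp, hyq⟩ | ⟨hxq, hyp⟩ | ⟨hxq, hyr⟩ | ⟨hxr, hyq⟩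
      · exact ⟨x, hx, y, hy, hr⟩
      · exact absurd (hyq ▸ hy) (hq j)
      · exact absurd (hxq ▸ hx) (hq i)
      · exact absurd (hxq ▸ hx) (hq i)
      · exact absurd (hyq ▸ hy) (hq j)

lemma exists_armFun {G : SimpleGraph V} {S : Set V}
    (hconn : ∀ x ∈ S, ∀ y ∈ S, ∃ w : G.Walk x y, ∀ z ∈ w.support, z ∈ S)
    {i j1 j2 j3 : Fin 4} (h12 : j1 ≠ j2) (h13 : j1 ≠ j3) (h23 : j2 ≠ j3)
    (hcov : ∀ j, j ≠ i → j = j1 ∨ j = j2 ∨ j = j3)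
    (hj1 : j1 ≠ i) (hj2 : j2 ≠ i) (hj3 : j3 ≠ i)
    (t : Fin 4 → V) (ht : ∀ j, j ≠ i → t j ∈ S) :
    ∃ c ∈ S, ∃ w : ∀ j, j ≠ i → G.Walk c (t j),
      (∀ j (hj : j ≠ i), (w j hj).IsPath ∧ ∀ z ∈ (w j hj).support, z ∈ S) ∧
      (∀ j (hj : j ≠ i) (k : Fin 4) (hk : k ≠ i), j ≠ k →
        ∀ z, z ∈ (w j hj).support → z ∈ (w k hk).support → z = c) := by
  classical
  obtain ⟨c, w1, w2, w3, hc, p1, p2, p3, s1, s2, s3, d12, d13, d23⟩ :=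
    exists_star hconn (ht j1 hj1) (ht j2 hj2) (ht j3 hj3)
  refine ⟨c, hc, fun j hj =>
    if h : j = j1 then w1.copy rfl (by rw [h]) else
    if h' : j = j2 then w2.copy rfl (by rw [h']) else
    w3.copy rfl (by rw [((hcov j hj).resolve_left h).resolve_left h']), ?_, ?_⟩
  · intro j hj
    rcases hcov j hj with rfl | rfl | hcase
    · dsimp only
      rw [dif_pos rfl]
      refine ⟨by simpa using p1, ?_⟩
      intro z hz
      rw [Walk.support_copy] at hz
      exact s1 z hz
    · dsimp only
      rw [dif_neg (Ne.symm h12), dif_pos rfl]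
      refine ⟨by simpa using p2, ?_⟩
      intro z hz
      rw [Walk.support_copy] at hz
      exact s2 z hz
    · subst hcase
      dsimp only
      rw [dif_neg (Ne.symm h13), dif_neg (Ne.symm h23)]
      refine ⟨by simpa using p3, ?_⟩
      intro z hz
      rw [Walk.support_copy] at hz
      exact s3 z hz
  · intro j hj k hk hjk z hz1 hz2
    rcases hcov j hj with rfl | rfl | hcase <;>
      [skip; skip; subst hcase] <;>
      rcases hcov k hk with rfl | rfl | hcase' <;>
      [skip; skip; subst hcase'; skip; skip; subst hcase'; skip; skip; subst hcase']
    · exact absurd rfl hjk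
    · dsimp only at hz1 hz2
      rw [dif_pos rfl, Walk.support_copy] at hz1
      rw [dif_neg (Ne.symm h12), dif_pos rfl, Walk.support_copy] at hz2
      exact d12 z hz1 hz2
    · dsimp only at hz1 hz2
      rw [dif_pos rfl, Walk.support_copy] at hz1
      rw [dif_neg (Ne.symm h13), dif_neg (Ne.symm h23), Walk.support_copy] at hz2
      exact d13 z hz1 hz2
    · dsimp only at hz1 hz2
      rw [dif_neg (Ne.symm h12), dif_pos rfl, Walk.support_copy] at hz1
      rw [dif_pos rfl, Walk.support_copy] at hz2
      exact d12 z hz2 hz1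
    · exact absurd rfl hjk
    · dsimp only at hz1 hz2
      rw [dif_neg (Ne.symm h12), dif_pos rfl, Walk.support_copy] at hz1
      rw [dif_neg (Ne.symm h13), dif_neg (Ne.symm h23), Walk.support_copy] at hz2
      exact d23 z hz1 hz2
    · dsimp only at hz1 hz2
      rw [dif_neg (Ne.symm h13), dif_neg (Ne.symm h23), Walk.support_copy] at hz1
      rw [dif_pos rfl, Walk.support_copy] at hz2
      exact d13 z hz2 hz1
    · dsimp only at hz1 hz2
      rw [dif_neg (Ne.symm h13), dif_neg (Ne.symm h23), Walk.support_copy] at hz1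
      rw [dif_neg (Ne.symm h12), dif_pos rfl, Walk.support_copy] at hz2
      exact d23 z hz2 hz1
    · exact absurd rfl hjk

lemma fin4_cover : ∀ i : Fin 4, ∃ j1 j2 j3 : Fin 4, j1 ≠ j2 ∧ j1 ≠ j3 ∧ j2 ≠ j3 ∧
    j1 ≠ i ∧ j2 ≠ i ∧ j3 ≠ i ∧ ∀ j, j ≠ i → j = j1 ∨ j = j2 ∨ j = j3 := by decide

theorem hasK4_of_conn4 {G : SimpleGraph V} (h : Conn4 G) : HasK4Subdivision G := by
  classical
  obtain ⟨S, hne, hdisj, hconn, hadj⟩ := h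
  have hpair : ∀ i j : Fin 4, i < j →
      ∃ xy : V × V, xy.1 ∈ S i ∧ xy.2 ∈ S j ∧ G.Adj xy.1 xy.2 := by
    intro i j hij
    obtain ⟨x, hx, y, hy, hxy⟩ := hadj i j (Fin.ne_of_lt hij)
    exact ⟨(x, y), hx, hy, hxy⟩
  choose F hF1 hF2 hF3 using hpair
  set att : Fin 4 → Fin 4 → V := fun i j =>
    if h : i < j then (F i j h).1 else if h' : j < i then (F j i h').2 else (hne i).some
    with hattdef
  have hatt1 : ∀ i j, i ≠ j → att i j ∈ S i := by
    intro i j hij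
    rcases hij.lt_or_gt with h | h
    · rw [hattdef]; dsimp only; rw [dif_pos h]; exact hF1 i j h
    · rw [hattdef]; dsimp only; rw [dif_neg (lt_asymm h), dif_pos h]; exact hF2 j i h
  have hatt2 : ∀ i j (hij : i ≠ j), G.Adj (att i j) (att j i) := by
    intro i j hij
    rcases hij.lt_or_gt with h | h
    · have e1 : att i j = (F i j h).1 := by rw [hattdef]; dsimp only; rw [dif_pos h]
      have e2 : att j i = (F i j h).2 := by
        rw [hattdef]; dsimp only; rw [dif_neg (lt_asymm h), dif_pos h]
      rw [e1, e2]; exact hF3 i j h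
    · have e1 : att i j = (F j i h).2 := by
        rw [hattdef]; dsimp only; rw [dif_neg (lt_asymm h), dif_pos h]
      have e2 : att j i = (F j i h).1 := by rw [hattdef]; dsimp only; rw [dif_pos h]
      rw [e1, e2]; exact (hF3 j i h).symm
  have hstar : ∀ i : Fin 4, ∃ c ∈ S i, ∃ w : ∀ j, j ≠ i → G.Walk c (att i j),
      (∀ j (hj : j ≠ i), (w j hj).IsPath ∧ ∀ z ∈ (w j hj).support, z ∈ S i) ∧
      (∀ j (hj : j ≠ i) (k : Fin 4) (hk : k ≠ i), j ≠ k →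
        ∀ z, z ∈ (w j hj).support → z ∈ (w k hk).support → z = c) := by
    intro i
    obtain ⟨j1, j2, j3, h12, h13, h23, hj1, hj2, hj3, hcov⟩ := fin4_cover i
    exact exists_armFun (hconn i) h12 h13 h23 hcov hj1 hj2 hj3 (att i)
      (fun j hj => hatt1 i j (Ne.symm hj))
  choose cc hcc arm harm1 harm2 using hstar
  have hsupp : ∀ (i j : Fin 4) (h : i ≠ j) (z : V), z ∈ ((arm i j (Ne.symm h)).append
      (Walk.cons (hatt2 i j h) ((arm j i h).reverse))).support →
      z ∈ (arm i j (Ne.symm h)).support ∨ z ∈ (arm j i h).support := by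
    intro i j h z hz
    rw [Walk.mem_support_append_iff] at hz
    rcases hz with hz | hz
    · exact Or.inl hz
    · rw [Walk.support_cons, List.mem_cons] at hz
      rcases hz with rfl | hz
      · exact Or.inl (arm i j (Ne.symm h)).end_mem_support
      · rw [Walk.support_reverse, List.mem_reverse] at hz
        exact Or.inr hz
  refine ⟨cc, fun i j => if h : i = j then ⟨cc 0, cc 0, Walk.nil⟩ else
    ⟨cc i, cc j, (arm i j (Ne.symm h)).append
      (Walk.cons (hatt2 i j h) ((arm j i h).reverse))⟩, ?_, ?_, ?_, ?_, ?_⟩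
  · intro i j hij
    by_contra hne2
    exact (hdisj i j hne2).ne_of_mem (hcc i) (hcc j) hij
  · intro i j hij
    dsimp only
    rw [dif_neg hij]
    exact ⟨rfl, rfl⟩
  · intro i j hij
    dsimp only
    rw [dif_neg hij]
    dsimp only
    rw [Walk.isPath_def, Walk.support_append, Walk.support_cons, List.tail_cons]
    refine List.Nodup.append (harm1 i j (Ne.symm hij)).1.support_nodup
      ((harm1 j i hij).1.reverse.support_nodup) ?_
    intro a ha hb
    rw [Walk.support_reverse, List.mem_reverse] at hb
    exact (hdisj i j hij).ne_of_mem ((harm1 i j (Ne.symm hij)).2 a ha)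
      ((harm1 j i hij).2 a hb) rfl
  · intro i j hij k hk
    dsimp only at hk
    rw [dif_neg hij] at hk
    dsimp only at hk
    by_contra hc
    push_neg at hc
    obtain ⟨hki, hkj⟩ := hc
    rcases hsupp i j hij (cc k) hk with h1 | h1
    · exact (hdisj k i hki).ne_of_mem (hcc k) ((harm1 i j (Ne.symm hij)).2 _ h1) rfl
    · exact (hdisj k j hkj).ne_of_mem (hcc k) ((harm1 j i hij).2 _ h1) rfl
  · intro i j i' j' hij hij' hpairs x hx1 hx2
    dsimp only at hx1 hx2
    rw [dif_neg hij] at hx1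
    rw [dif_neg hij'] at hx2
    dsimp only at hx1 hx2
    rcases hsupp i j hij x hx1 with h1 | h1 <;> rcases hsupp i' j' hij' x hx2 with h2 | h2
    · have hxi : x ∈ S i := (harm1 i j (Ne.symm hij)).2 x h1
      have hxi' : x ∈ S i' := (harm1 i' j' (Ne.symm hij')).2 x h2
      have hii' : i = i' := by
        by_contra hcne
        exact (hdisj i i' hcne).ne_of_mem hxi hxi' rfl
      subst hii'
      have hjj' : j ≠ j' := by
        intro hcne
        apply hpairs
        rw [hcne]
      exact ⟨i, (harm2 i j (Ne.symm hij) j' (Ne.symm hij') hjj' x h1 h2).symm⟩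
    · have hxi : x ∈ S i := (harm1 i j (Ne.symm hij)).2 x h1
      have hxj' : x ∈ S j' := (harm1 j' i' hij').2 x h2
      have hij'' : i = j' := by
        by_contra hcne
        exact (hdisj i j' hcne).ne_of_mem hxi hxj' rfl
      subst hij''
      have hji' : j ≠ i' := by
        intro hcne
        apply hpairs
        rw [hcne, Set.pair_comm]
      exact ⟨i, (harm2 i j (Ne.symm hij) i' hij' hji' x h1 h2).symm⟩
    · have hxj : x ∈ S j := (harm1 j i hij).2 x h1
      have hxi' : x ∈ S i' := (harm1 i' j' (Ne.symm hij')).2 x h2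
      have hji'' : j = i' := by
        by_contra hcne
        exact (hdisj j i' hcne).ne_of_mem hxj hxi' rfl
      subst hji''
      have hij2 : i ≠ j' := by
        intro hcne
        apply hpairs
        rw [hcne, Set.pair_comm]
      exact ⟨j, (harm2 j i hij j' (Ne.symm hij') hij2 x h1 h2).symm⟩
    · have hxj : x ∈ S j := (harm1 j i hij).2 x h1
      have hxj' : x ∈ S j' := (harm1 j' i' hij').2 x h2
      have hjj' : j = j' := by
        by_contra hcne
        exact (hdisj j j' hcne).ne_of_mem hxj hxj' rfl
      subst hjj'
      have hii2 : i ≠ i' := by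
        intro hcne
        apply hpairs
        rw [hcne]
      exact ⟨j, (harm2 j i hij i' hij' hii2 x h1 h2).symm⟩

noncomputable def nd (G : SimpleGraph V) (x : V) : ℕ := (G.neighborSet x).ncard

lemma finite_sym2 [Finite V] : Finite (Sym2 V) :=
  Finite.of_surjective (Sym2.mk (α := V)).uncurry
    Sym2.mk_surjective

lemma three_le_ncard_of_triple {α : Type*} {s : Set α} (hfin : s.Finite) {a b c : α}
    (hab : a ≠ b) (hac : a ≠ c) (hbc : b ≠ c)
    (ha : a ∈ s) (hb : b ∈ s) (hc : c ∈ s) : 3 ≤ s.ncard := by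
  have h3 : ({a, b, c} : Set α).ncard = 3 := Set.ncard_eq_three.mpr ⟨a, b, c, hab, hac, hbc, rfl⟩
  have hsub : ({a, b, c} : Set α) ⊆ s := by
    intro z hz
    rcases hz with rfl | rfl | rfl
    · exact ha
    · exact hb
    · exact hc
  calc 3 = ({a, b, c} : Set α).ncard := h3.symm
  _ ≤ s.ncard := Set.ncard_le_ncard hsub hfin

lemma nd_ne_zero [Finite V] {G : SimpleGraph V} {x y : V} (h : G.Adj x y) : nd G x ≠ 0 := by
  intro h0
  rw [nd, Set.ncard_eq_zero] at h0
  have hy : y ∈ G.neighborSet x := h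
  rw [h0] at hy
  exact hy

lemma fromDA (G : SimpleGraph V) (D A : Set (Sym2 V)) (x y : V) :
    (SimpleGraph.fromEdgeSet ((G.edgeSet \ D) ∪ A)).Adj x y ↔
      ((G.Adj x y ∧ s(x, y) ∉ D) ∨ (s(x, y) ∈ A ∧ x ≠ y)) := by
  simp only [SimpleGraph.fromEdgeSet_adj, Set.mem_union, Set.mem_diff, SimpleGraph.mem_edgeSet]
  constructor
  · rintro ⟨h1 | h2, hne⟩
    · exact Or.inl h1
    · exact Or.inr ⟨h2, hne⟩
  · rintro (⟨ha, hd⟩ | ⟨ha, hne⟩)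
    · exact ⟨Or.inl ⟨ha, hd⟩, ha.ne⟩
    · exact ⟨Or.inr ha, hne⟩

lemma edge_lt [Finite V] (G : SimpleGraph V) (D A : Set (Sym2 V))
    (hD : D ⊆ G.edgeSet) (hAD : A.ncard < D.ncard) :
    (SimpleGraph.fromEdgeSet ((G.edgeSet \ D) ∪ A)).edgeSet.ncard < G.edgeSet.ncard := by
  haveI : Finite (Sym2 V) := finite_sym2
  have h1 : (SimpleGraph.fromEdgeSet ((G.edgeSet \ D) ∪ A)).edgeSet.ncard ≤
      ((G.edgeSet \ D) ∪ A).ncard := by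
    apply Set.ncard_le_ncard _ (Set.toFinite _)
    rw [SimpleGraph.edgeSet_fromEdgeSet]
    exact Set.diff_subset
  have h2 : ((G.edgeSet \ D) ∪ A).ncard ≤ (G.edgeSet \ D).ncard + A.ncard :=
    Set.ncard_union_le _ _
  have h3 : (G.edgeSet \ D).ncard = G.edgeSet.ncard - D.ncard :=
    Set.ncard_diff hD (Set.toFinite _)
  have h4 : D.ncard ≤ G.edgeSet.ncard := Set.ncard_le_ncard hD (Set.toFinite _)
  omega

lemma conn4_of_K4 {G : SimpleGraph V} {a b c d : V}
    (hab : G.Adj a b) (hac : G.Adj a c) (had : G.Adj a d)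
    (hbc : G.Adj b c) (hbd : G.Adj b d) (hcd : G.Adj c d) : Conn4 G := by
  classical
  have single : ∀ (s : V) (x : V), x ∈ ({s} : Set V) → ∀ y ∈ ({s} : Set V),
      ∃ w : G.Walk x y, ∀ z ∈ w.support, z ∈ ({s} : Set V) := by
    intro s x hx y hy
    rw [Set.mem_singleton_iff] at hx hy
    subst hx
    rw [hy]
    exact ⟨Walk.nil, by simp⟩
  have hba := hab.symm; have hca := hac.symm; have hda := had.symm
  have hcb := hbc.symm; have hdb := hbd.symm; have hdc := hcd.symm
  have nab := hab.ne; have nac := hac.ne; have nad := had.ne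
  have nbc := hbc.ne; have nbd := hbd.ne; have ncd := hcd.ne
  have nba := nab.symm; have nca := nac.symm; have nda := nad.symm
  have ncb := nbc.symm; have ndb := nbd.symm; have ndc := ncd.symm
  refine ⟨fun i => if i = 0 then {a} else if i = 1 then {b} else if i = 2 then {c} else {d},
    ?_, ?_, ?_, ?_⟩
  · intro i
    fin_cases i <;> simp
  · intro i j hij
    fin_cases i <;> fin_cases j <;>
      simp_all [Set.disjoint_singleton_left]
  · intro i x hx y hy
    fin_cases i <;> simp_all only [if_true, if_false] <;>
      first
      | exact single a x hx y hy
      | exact single b x hx y hy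
      | exact single c x hx y hy
      | exact single d x hx y hy
      | simp_all
  · intro i j hij
    fin_cases i <;> fin_cases j <;> simp_all

lemma mem_triple_left {a b c : V} : a ∈ ({a, b, c} : Set V) := Or.inl rfl
lemma mem_triple_mid {a b c : V} : b ∈ ({a, b, c} : Set V) := Or.inr (Or.inl rfl)
lemma mem_triple_right {a b c : V} : c ∈ ({a, b, c} : Set V) := Or.inr (Or.inr rfl)

lemma step [Fintype V] {G : SimpleGraph V} {v p q r : V}
    (hN : G.neighborSet v = {p, q, r})
    (hpq' : p ≠ q) (hpr' : p ≠ r) (hqr' : q ≠ r)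
    (hpq : ¬ G.Adj p q) (hqr : ¬ G.Adj q r)
    (hdeg : ∀ x, nd G x = 0 ∨ 3 ≤ nd G x)
    (IH : ∀ H : SimpleGraph V, H.edgeSet.ncard < G.edgeSet.ncard → H.edgeSet.Nonempty →
      (∀ x, nd H x = 0 ∨ 3 ≤ nd H x) → Conn4 H) : Conn4 G := by
  classical
  haveI : Finite (Sym2 V) := finite_sym2
  have hvp : G.Adj v p := by rw [← SimpleGraph.mem_neighborSet, hN]; exact mem_triple_left
  have hvq : G.Adj v q := by rw [← SimpleGraph.mem_neighborSet, hN]; exact mem_triple_mid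
  have hvr : G.Adj v r := by rw [← SimpleGraph.mem_neighborSet, hN]; exact mem_triple_right
  have hpv : p ≠ v := hvp.ne'
  have hqv : q ≠ v := hvq.ne'
  have hrv : r ≠ v := hvr.ne'
  set D : Set (Sym2 V) := {s(v, p), s(v, q), s(v, r)} with hD
  set A : Set (Sym2 V) := {s(p, q), s(q, r)} with hA
  set H := SimpleGraph.fromEdgeSet ((G.edgeSet \ D) ∪ A) with hHdef
  have hadjH : ∀ x y, H.Adj x y ↔
      ((G.Adj x y ∧ s(x, y) ∉ D) ∨ (s(x, y) ∈ A ∧ x ≠ y)) := fun x y => fromDA G D A x y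
  have hDnot : ∀ x y : V, x ≠ v → y ≠ v → s(x, y) ∉ D := by
    intro x y hx hy hmem
    rw [hD] at hmem
    simp only [Set.mem_insert_iff, Set.mem_singleton_iff, Sym2.eq_iff] at hmem
    tauto
  have hAmem : ∀ x y : V, s(x, y) ∈ A ↔
      ((x = p ∧ y = q) ∨ (x = q ∧ y = p) ∨ (x = q ∧ y = r) ∨ (x = r ∧ y = q)) := by
    intro x y
    rw [hA]
    simp only [Set.mem_insert_iff, Set.mem_singleton_iff, Sym2.eq_iff]
    tauto
  have hNmem : ∀ x : V, G.Adj v x → (x = p ∨ x = q ∨ x = r) := by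
    intro x hx
    have : x ∈ G.neighborSet v := hx
    rw [hN] at this
    simpa using this
  have hviso : ∀ x, ¬ H.Adj v x := by
    intro x hx
    rw [hadjH] at hx
    rcases hx with ⟨hGA, hDn⟩ | ⟨hAm, _⟩
    · rcases hNmem x hGA with rfl | rfl | rfl
      · exact hDn (by rw [hD]; exact mem_triple_left)
      · exact hDn (by rw [hD]; exact mem_triple_mid)
      · exact hDn (by rw [hD]; exact mem_triple_right)
    · rw [hAmem] at hAm
      rcases hAm with ⟨h1, _⟩ | ⟨h1, _⟩ | ⟨h1, _⟩ | ⟨h1, _⟩ <;>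
        [exact hpv h1.symm; exact hqv h1.symm; exact hqv h1.symm; exact hrv h1.symm]
  have hHG : ∀ x y, H.Adj x y → G.Adj x y ∨ (x = p ∧ y = q) ∨ (x = q ∧ y = p) ∨
      (x = q ∧ y = r) ∨ (x = r ∧ y = q) := by
    intro x y hx
    rw [hadjH] at hx
    rcases hx with ⟨hGA, _⟩ | ⟨hAm, _⟩
    · exact Or.inl hGA
    · exact Or.inr ((hAmem x y).mp hAm)
  have hDsub : D ⊆ G.edgeSet := by
    intro e he
    rw [hD] at he
    rcases he with rfl | rfl | rfl
    · exact hvp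
    · exact hvq
    · exact hvr
  have hDcard : 3 ≤ D.ncard := by
    have e1 : s(v, p) ≠ s(v, q) := by
      intro h
      rcases Sym2.eq_iff.mp h with ⟨_, h2⟩ | ⟨h2, _⟩
      · exact hpq' h2
      · exact hqv h2.symm
    have e2 : s(v, p) ≠ s(v, r) := by
      intro h
      rcases Sym2.eq_iff.mp h with ⟨_, h2⟩ | ⟨h2, _⟩
      · exact hpr' h2
      · exact hrv h2.symm
    have e3 : s(v, q) ≠ s(v, r) := by
      intro h
      rcases Sym2.eq_iff.mp h with ⟨_, h2⟩ | ⟨h2, _⟩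
      · exact hqr' h2
      · exact hrv h2.symm
    rw [hD]
    exact three_le_ncard_of_triple (Set.toFinite _) e1 e2 e3
      mem_triple_left mem_triple_mid mem_triple_right
  have hAcard : A.ncard ≤ 2 := by
    rw [hA]
    calc ({s(p, q), s(q, r)} : Set (Sym2 V)).ncard ≤ ({s(q, r)} : Set (Sym2 V)).ncard + 1 :=
        Set.ncard_insert_le _ _
    _ ≤ 2 := by rw [Set.ncard_singleton]
  have hlt : H.edgeSet.ncard < G.edgeSet.ncard := by
    rw [hHdef]
    exact edge_lt G D A hDsub (by omega)
  have hHpq : H.Adj p q := by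
    rw [hadjH]
    exact Or.inr ⟨by rw [hA]; exact Or.inl rfl, hpq'⟩
  have hHne : H.edgeSet.Nonempty := ⟨s(p, q), hHpq⟩
  -- degrees
  have hrealH : ∀ x y : V, G.Adj x y → x ≠ v → y ≠ v → H.Adj x y := by
    intro x y h hx hy
    rw [hadjH]
    exact Or.inl ⟨h, hDnot x y hx hy⟩
  have hdegH : ∀ x, nd H x = 0 ∨ 3 ≤ nd H x := by
    intro x
    by_cases hxv : x = v
    · subst hxv
      left
      have hemp : H.neighborSet x = ∅ :=
        Set.eq_empty_iff_forall_notMem.mpr (fun y hy => hviso y hy)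
      simp [nd, hemp]
    · by_cases hxp : x = p
      · rw [hxp]
        right
        have h3p : 3 ≤ (G.neighborSet p).ncard := (hdeg p).resolve_left (nd_ne_zero hvp.symm)
        have h2 : 2 ≤ (G.neighborSet p \ {v}).ncard := by
          rw [Set.ncard_diff_singleton_of_mem (show v ∈ G.neighborSet p from hvp.symm)]
          omega
        have h2' : 1 < (G.neighborSet p \ {v}).ncard := by omega
        obtain ⟨s, hs, t, ht, hst⟩ := (Set.one_lt_ncard (Set.toFinite _)).mp h2'
        obtain ⟨hsN, hsv⟩ := hs
        obtain ⟨htN, htv⟩ := ht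
        rw [Set.mem_singleton_iff] at hsv htv
        have hsq : s ≠ q := fun hc => hpq (hc ▸ hsN)
        have htq : t ≠ q := fun hc => hpq (hc ▸ htN)
        refine three_le_ncard_of_triple (Set.toFinite _) hsq.symm htq.symm hst
          (?_ : q ∈ H.neighborSet p) ?_ ?_
        · exact hHpq
        · exact hrealH p s hsN hpv hsv
        · exact hrealH p t htN hpv htv
      · by_cases hxq : x = q
        · rw [hxq]
          right
          have h3q : 3 ≤ (G.neighborSet q).ncard := (hdeg q).resolve_left (nd_ne_zero hvq.symm)
          have h2 : 2 ≤ (G.neighborSet q \ {v}).ncard := by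
            rw [Set.ncard_diff_singleton_of_mem (show v ∈ G.neighborSet q from hvq.symm)]
            omega
          have h2' : 1 < (G.neighborSet q \ {v}).ncard := by omega
          obtain ⟨s, hs, t, ht, hst⟩ := (Set.one_lt_ncard (Set.toFinite _)).mp h2'
          obtain ⟨hsN, hsv⟩ := hs
          obtain ⟨htN, htv⟩ := ht
          rw [Set.mem_singleton_iff] at hsv htv
          have hsp : s ≠ p := fun hc => hpq (G.adj_symm (hc ▸ hsN))
          have htp : t ≠ p := fun hc => hpq (G.adj_symm (hc ▸ htN))
          refine three_le_ncard_of_triple (Set.toFinite _) hsp.symm htp.symm hst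
            (?_ : p ∈ H.neighborSet q) ?_ ?_
          · exact hHpq.symm
          · exact hrealH q s hsN hqv hsv
          · exact hrealH q t htN hqv htv
        · by_cases hxr : x = r
          · rw [hxr]
            right
            have h3r : 3 ≤ (G.neighborSet r).ncard := (hdeg r).resolve_left (nd_ne_zero hvr.symm)
            have h2 : 2 ≤ (G.neighborSet r \ {v}).ncard := by
              rw [Set.ncard_diff_singleton_of_mem (show v ∈ G.neighborSet r from hvr.symm)]
              omega
            have h2' : 1 < (G.neighborSet r \ {v}).ncard := by omega
            obtain ⟨s, hs, t, ht, hst⟩ := (Set.one_lt_ncard (Set.toFinite _)).mp h2'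
            obtain ⟨hsN, hsv⟩ := hs
            obtain ⟨htN, htv⟩ := ht
            rw [Set.mem_singleton_iff] at hsv htv
            have hsq : s ≠ q := fun hc => hqr (G.adj_symm (hc ▸ hsN))
            have htq : t ≠ q := fun hc => hqr (G.adj_symm (hc ▸ htN))
            have hHrq : H.Adj r q := by
              rw [hadjH]
              exact Or.inr ⟨by rw [hA]; right; rw [Set.mem_singleton_iff, Sym2.eq_iff]; tauto,
                hqr'.symm⟩
            refine three_le_ncard_of_triple (Set.toFinite _) hsq.symm htq.symm hst
              (?_ : q ∈ H.neighborSet r) ?_ ?_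
            · exact hHrq
            · exact hrealH r s hsN hrv hsv
            · exact hrealH r t htN hrv htv
          · -- untouched vertex
            have hxnotin : ∀ y, H.Adj x y → G.Adj x y := by
              intro y hy
              rcases hHG x y hy with h | h
              · exact h
              · exfalso
                rcases h with ⟨h1, _⟩ | ⟨h1, _⟩ | ⟨h1, _⟩ | ⟨h1, _⟩ <;>
                  [exact hxp h1; exact hxq h1; exact hxq h1; exact hxr h1]
            rcases hdeg x with h0 | h3
            · left
              have h0' : G.neighborSet x = ∅ := by
                rw [nd, Set.ncard_eq_zero (Set.toFinite _)] at h0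
                exact h0
              have hemp : H.neighborSet x = ∅ := by
                apply Set.eq_empty_iff_forall_notMem.mpr
                intro y hy
                have hmem : y ∈ G.neighborSet x := hxnotin y hy
                rw [h0'] at hmem
                exact hmem
              simp [nd, hemp]
            · right
              refine le_trans h3 (Set.ncard_le_ncard ?_ (Set.toFinite _))
              intro y hy
              have hyv : y ≠ v := by
                intro hc
                have hadj : G.Adj v x := G.adj_symm (hc ▸ (hy : G.Adj x y))
                rcases hNmem x hadj with h | h | h
                · exact hxp h
                · exact hxq h
                · exact hxr h
              exact hrealH x y hy hxv hyv
  have hconn := IH H hlt hHne hdegH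
  exact conn4_lift hHG hvp hvq hvr hviso hconn

lemma op2 [Fintype V] {G : SimpleGraph V} {v a b c : V}
    (hN : G.neighborSet v = {a, b, c})
    (hab' : a ≠ b) (hac' : a ≠ c) (hbc' : b ≠ c)
    (hac : ¬ G.Adj a c) (hb4 : 4 ≤ nd G b)
    (hdeg : ∀ x, nd G x = 0 ∨ 3 ≤ nd G x)
    (IH : ∀ H : SimpleGraph V, H.edgeSet.ncard < G.edgeSet.ncard → H.edgeSet.Nonempty →
      (∀ x, nd H x = 0 ∨ 3 ≤ nd H x) → Conn4 H) : Conn4 G := by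
  classical
  haveI : Finite (Sym2 V) := finite_sym2
  have hva : G.Adj v a := by rw [← SimpleGraph.mem_neighborSet, hN]; exact mem_triple_left
  have hvb : G.Adj v b := by rw [← SimpleGraph.mem_neighborSet, hN]; exact mem_triple_mid
  have hvc : G.Adj v c := by rw [← SimpleGraph.mem_neighborSet, hN]; exact mem_triple_right
  have hav : a ≠ v := hva.ne'
  have hbv : b ≠ v := hvb.ne'
  have hcv : c ≠ v := hvc.ne'
  set D : Set (Sym2 V) := {s(v, a), s(v, b), s(v, c)} with hD
  set A : Set (Sym2 V) := {s(a, c)} with hA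
  set H := SimpleGraph.fromEdgeSet ((G.edgeSet \ D) ∪ A) with hHdef
  have hadjH : ∀ x y, H.Adj x y ↔
      ((G.Adj x y ∧ s(x, y) ∉ D) ∨ (s(x, y) ∈ A ∧ x ≠ y)) := fun x y => fromDA G D A x y
  have hDnot : ∀ x y : V, x ≠ v → y ≠ v → s(x, y) ∉ D := by
    intro x y hx hy hmem
    rw [hD] at hmem
    simp only [Set.mem_insert_iff, Set.mem_singleton_iff, Sym2.eq_iff] at hmem
    tauto
  have hAmem : ∀ x y : V, s(x, y) ∈ A ↔ ((x = a ∧ y = c) ∨ (x = c ∧ y = a)) := by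
    intro x y
    rw [hA]
    simp only [Set.mem_singleton_iff, Sym2.eq_iff]
  have hNmem : ∀ x : V, G.Adj v x → (x = a ∨ x = b ∨ x = c) := by
    intro x hx
    have : x ∈ G.neighborSet v := hx
    rw [hN] at this
    simpa using this
  have hviso : ∀ x, ¬ H.Adj v x := by
    intro x hx
    rw [hadjH] at hx
    rcases hx with ⟨hGA, hDn⟩ | ⟨hAm, _⟩
    · rcases hNmem x hGA with rfl | rfl | rfl
      · exact hDn (by rw [hD]; exact mem_triple_left)
      · exact hDn (by rw [hD]; exact mem_triple_mid)
      · exact hDn (by rw [hD]; exact mem_triple_right)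
    · rw [hAmem] at hAm
      rcases hAm with ⟨h1, _⟩ | ⟨h1, _⟩
      · exact hav h1.symm
      · exact hcv h1.symm
  have hHG : ∀ x y, H.Adj x y → G.Adj x y ∨ (x = a ∧ y = c) ∨ (x = c ∧ y = a) ∨
      (x = c ∧ y = a) ∨ (x = a ∧ y = c) := by
    intro x y hx
    rw [hadjH] at hx
    rcases hx with ⟨hGA, _⟩ | ⟨hAm, _⟩
    · exact Or.inl hGA
    · rcases (hAmem x y).mp hAm with h | h
      · exact Or.inr (Or.inl h)
      · exact Or.inr (Or.inr (Or.inl h))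
  have hDsub : D ⊆ G.edgeSet := by
    intro e he
    rw [hD] at he
    rcases he with rfl | rfl | rfl
    · exact hva
    · exact hvb
    · exact hvc
  have hDcard : 3 ≤ D.ncard := by
    have e1 : s(v, a) ≠ s(v, b) := by
      intro h
      rcases Sym2.eq_iff.mp h with ⟨_, h2⟩ | ⟨h2, _⟩
      · exact hab' h2
      · exact hbv h2.symm
    have e2 : s(v, a) ≠ s(v, c) := by
      intro h
      rcases Sym2.eq_iff.mp h with ⟨_, h2⟩ | ⟨h2, _⟩
      · exact hac' h2
      · exact hcv h2.symm
    have e3 : s(v, b) ≠ s(v, c) := by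
      intro h
      rcases Sym2.eq_iff.mp h with ⟨_, h2⟩ | ⟨h2, _⟩
      · exact hbc' h2
      · exact hcv h2.symm
    rw [hD]
    exact three_le_ncard_of_triple (Set.toFinite _) e1 e2 e3
      mem_triple_left mem_triple_mid mem_triple_right
  have hAcard : A.ncard ≤ 1 := by
    rw [hA, Set.ncard_singleton]
  have hlt : H.edgeSet.ncard < G.edgeSet.ncard := by
    rw [hHdef]
    exact edge_lt G D A hDsub (by omega)
  have hHac : H.Adj a c := by
    rw [hadjH]
    exact Or.inr ⟨by rw [hA]; rfl, hac'⟩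
  have hHne : H.edgeSet.Nonempty := ⟨s(a, c), hHac⟩
  have hrealH : ∀ x y : V, G.Adj x y → x ≠ v → y ≠ v → H.Adj x y := by
    intro x y h hx hy
    rw [hadjH]
    exact Or.inl ⟨h, hDnot x y hx hy⟩
  have hdegH : ∀ x, nd H x = 0 ∨ 3 ≤ nd H x := by
    intro x
    by_cases hxv : x = v
    · subst hxv
      left
      have hemp : H.neighborSet x = ∅ :=
        Set.eq_empty_iff_forall_notMem.mpr (fun y hy => hviso y hy)
      simp [nd, hemp]
    · by_cases hxa : x = a
      · rw [hxa]
        right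
        have h3a : 3 ≤ (G.neighborSet a).ncard := (hdeg a).resolve_left (nd_ne_zero hva.symm)
        have h2 : 2 ≤ (G.neighborSet a \ {v}).ncard := by
          rw [Set.ncard_diff_singleton_of_mem (show v ∈ G.neighborSet a from hva.symm)]
          omega
        have h2' : 1 < (G.neighborSet a \ {v}).ncard := by omega
        obtain ⟨s, hs, t, ht, hst⟩ := (Set.one_lt_ncard (Set.toFinite _)).mp h2'
        obtain ⟨hsN, hsv⟩ := hs
        obtain ⟨htN, htv⟩ := ht
        rw [Set.mem_singleton_iff] at hsv htv
        have hsc : s ≠ c := fun hcx => hac (hcx ▸ hsN)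
        have htc : t ≠ c := fun hcx => hac (hcx ▸ htN)
        refine three_le_ncard_of_triple (Set.toFinite _) hsc.symm htc.symm hst
          (?_ : c ∈ H.neighborSet a) ?_ ?_
        · exact hHac
        · exact hrealH a s hsN hav hsv
        · exact hrealH a t htN hav htv
      · by_cases hxc : x = c
        · rw [hxc]
          right
          have h3c : 3 ≤ (G.neighborSet c).ncard := (hdeg c).resolve_left (nd_ne_zero hvc.symm)
          have h2 : 2 ≤ (G.neighborSet c \ {v}).ncard := by
            rw [Set.ncard_diff_singleton_of_mem (show v ∈ G.neighborSet c from hvc.symm)]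
            omega
          have h2' : 1 < (G.neighborSet c \ {v}).ncard := by omega
          obtain ⟨s, hs, t, ht, hst⟩ := (Set.one_lt_ncard (Set.toFinite _)).mp h2'
          obtain ⟨hsN, hsv⟩ := hs
          obtain ⟨htN, htv⟩ := ht
          rw [Set.mem_singleton_iff] at hsv htv
          have hsa : s ≠ a := fun hcx => hac (G.adj_symm (hcx ▸ hsN))
          have hta : t ≠ a := fun hcx => hac (G.adj_symm (hcx ▸ htN))
          refine three_le_ncard_of_triple (Set.toFinite _) hsa.symm hta.symm hst
            (?_ : a ∈ H.neighborSet c) ?_ ?_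
          · exact hHac.symm
          · exact hrealH c s hsN hcv hsv
          · exact hrealH c t htN hcv htv
        · by_cases hxb : x = b
          · rw [hxb]
            right
            have hsub : G.neighborSet b \ {v} ⊆ H.neighborSet b := by
              intro y hy
              obtain ⟨hyN, hyv⟩ := hy
              rw [Set.mem_singleton_iff] at hyv
              exact hrealH b y hyN hbv hyv
            have hcard : 3 ≤ (G.neighborSet b \ {v}).ncard := by
              rw [Set.ncard_diff_singleton_of_mem (show v ∈ G.neighborSet b from hvb.symm)]
              have : 4 ≤ (G.neighborSet b).ncard := hb4
              omega
            exact le_trans hcard (Set.ncard_le_ncard hsub (Set.toFinite _))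
          · have hxnotin : ∀ y, H.Adj x y → G.Adj x y := by
              intro y hy
              rcases hHG x y hy with h | h
              · exact h
              · exfalso
                rcases h with ⟨h1, _⟩ | ⟨h1, _⟩ | ⟨h1, _⟩ | ⟨h1, _⟩ <;>
                  [exact hxa h1; exact hxc h1; exact hxc h1; exact hxa h1]
            rcases hdeg x with h0 | h3
            · left
              have h0' : G.neighborSet x = ∅ := by
                rw [nd, Set.ncard_eq_zero (Set.toFinite _)] at h0
                exact h0
              have hemp : H.neighborSet x = ∅ := by
                apply Set.eq_empty_iff_forall_notMem.mpr
                intro y hy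
                have hmem : y ∈ G.neighborSet x := hxnotin y hy
                rw [h0'] at hmem
                exact hmem
              simp [nd, hemp]
            · right
              refine le_trans h3 (Set.ncard_le_ncard ?_ (Set.toFinite _))
              intro y hy
              have hyv : y ≠ v := by
                intro hcx
                have hadj : G.Adj v x := G.adj_symm (hcx ▸ (hy : G.Adj x y))
                rcases hNmem x hadj with h | h | h
                · exact hxa h
                · exact hxb h
                · exact hxc h
              exact hrealH x y hy hxv hyv
  have hconn := IH H hlt hHne hdegH
  exact conn4_lift hHG hva hvc hva hviso hconn

lemma op3 [Fintype V] {G : SimpleGraph V} {v a b c : V}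
    (hN : G.neighborSet v = {a, b, c}) (hNb : G.neighborSet b = {a, v, c})
    (hab' : a ≠ b) (hac' : a ≠ c) (hbc' : b ≠ c)
    (hac : ¬ G.Adj a c) (ha4 : 4 ≤ nd G a) (hc4 : 4 ≤ nd G c)
    (hdeg : ∀ x, nd G x = 0 ∨ 3 ≤ nd G x)
    (IH : ∀ H : SimpleGraph V, H.edgeSet.ncard < G.edgeSet.ncard → H.edgeSet.Nonempty →
      (∀ x, nd H x = 0 ∨ 3 ≤ nd H x) → Conn4 H) : Conn4 G := by
  classical
  haveI : Finite (Sym2 V) := finite_sym2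
  have hva : G.Adj v a := by rw [← SimpleGraph.mem_neighborSet, hN]; exact mem_triple_left
  have hvb : G.Adj v b := by rw [← SimpleGraph.mem_neighborSet, hN]; exact mem_triple_mid
  have hvc : G.Adj v c := by rw [← SimpleGraph.mem_neighborSet, hN]; exact mem_triple_right
  have hba : G.Adj b a := by rw [← SimpleGraph.mem_neighborSet, hNb]; exact mem_triple_left
  have hbc : G.Adj b c := by rw [← SimpleGraph.mem_neighborSet, hNb]; exact mem_triple_right
  have hav : a ≠ v := hva.ne'
  have hbv : b ≠ v := hvb.ne'
  have hcv : c ≠ v := hvc.ne'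
  set D : Set (Sym2 V) := {s(v, a), s(v, b), s(v, c), s(b, a), s(b, c)} with hD
  set A : Set (Sym2 V) := {s(a, c)} with hA
  set H := SimpleGraph.fromEdgeSet ((G.edgeSet \ D) ∪ A) with hHdef
  have hadjH : ∀ x y, H.Adj x y ↔
      ((G.Adj x y ∧ s(x, y) ∉ D) ∨ (s(x, y) ∈ A ∧ x ≠ y)) := fun x y => fromDA G D A x y
  have hDnot : ∀ x y : V, x ≠ v → y ≠ v → x ≠ b → y ≠ b → s(x, y) ∉ D := by
    intro x y hxv hyv hxb hyb hmem
    rw [hD] at hmem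
    simp only [Set.mem_insert_iff, Set.mem_singleton_iff, Sym2.eq_iff] at hmem
    tauto
  have hAmem : ∀ x y : V, s(x, y) ∈ A ↔ ((x = a ∧ y = c) ∨ (x = c ∧ y = a)) := by
    intro x y
    rw [hA]
    simp only [Set.mem_singleton_iff, Sym2.eq_iff]
  have hNmem : ∀ x : V, G.Adj v x → (x = a ∨ x = b ∨ x = c) := by
    intro x hx
    have : x ∈ G.neighborSet v := hx
    rw [hN] at this
    simpa using this
  have hNbmem : ∀ x : V, G.Adj b x → (x = a ∨ x = v ∨ x = c) := by
    intro x hx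
    have : x ∈ G.neighborSet b := hx
    rw [hNb] at this
    simpa using this
  have hviso : ∀ x, ¬ H.Adj v x := by
    intro x hx
    rw [hadjH] at hx
    rcases hx with ⟨hGA, hDn⟩ | ⟨hAm, _⟩
    · rcases hNmem x hGA with rfl | rfl | rfl
      · exact hDn (by rw [hD]; exact Or.inl rfl)
      · exact hDn (by rw [hD]; exact Or.inr (Or.inl rfl))
      · exact hDn (by rw [hD]; exact Or.inr (Or.inr (Or.inl rfl)))
    · rw [hAmem] at hAm
      rcases hAm with ⟨h1, _⟩ | ⟨h1, _⟩
      · exact hav h1.symm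
      · exact hcv h1.symm
  have hbiso : ∀ x, ¬ H.Adj b x := by
    intro x hx
    rw [hadjH] at hx
    rcases hx with ⟨hGA, hDn⟩ | ⟨hAm, _⟩
    · rcases hNbmem x hGA with rfl | rfl | rfl
      · exact hDn (by rw [hD]; exact Or.inr (Or.inr (Or.inr (Or.inl rfl))))
      · apply hDn
        rw [hD]
        have : s(b, x) = s(x, b) := Sym2.eq_swap
        rw [this]
        exact Or.inr (Or.inl rfl)
      · exact hDn (by rw [hD]; exact Or.inr (Or.inr (Or.inr (Or.inr rfl))))
    · rw [hAmem] at hAm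
      rcases hAm with ⟨h1, _⟩ | ⟨h1, _⟩
      · exact hab' h1.symm
      · exact hbc' h1
  have hHG : ∀ x y, H.Adj x y → G.Adj x y ∨ (x = a ∧ y = c) ∨ (x = c ∧ y = a) ∨
      (x = c ∧ y = a) ∨ (x = a ∧ y = c) := by
    intro x y hx
    rw [hadjH] at hx
    rcases hx with ⟨hGA, _⟩ | ⟨hAm, _⟩
    · exact Or.inl hGA
    · rcases (hAmem x y).mp hAm with h | h
      · exact Or.inr (Or.inl h)
      · exact Or.inr (Or.inr (Or.inl h))
  have hDsub : D ⊆ G.edgeSet := by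
    intro e he
    rw [hD] at he
    rcases he with rfl | rfl | rfl | rfl | rfl
    · exact hva
    · exact hvb
    · exact hvc
    · exact hba
    · exact hbc
  have hDcard : 3 ≤ D.ncard := by
    have e1 : s(v, a) ≠ s(v, b) := by
      intro h
      rcases Sym2.eq_iff.mp h with ⟨_, h2⟩ | ⟨h2, _⟩
      · exact hab' h2
      · exact hbv h2.symm
    have e2 : s(v, a) ≠ s(v, c) := by
      intro h
      rcases Sym2.eq_iff.mp h with ⟨_, h2⟩ | ⟨h2, _⟩
      · exact hac' h2
      · exact hcv h2.symm
    have e3 : s(v, b) ≠ s(v, c) := by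
      intro h
      rcases Sym2.eq_iff.mp h with ⟨_, h2⟩ | ⟨h2, _⟩
      · exact hbc' h2
      · exact hcv h2.symm
    have hsub : ({s(v, a), s(v, b), s(v, c)} : Set (Sym2 V)) ⊆ D := by
      intro e he
      rw [hD]
      rcases he with rfl | rfl | rfl
      · exact Or.inl rfl
      · exact Or.inr (Or.inl rfl)
      · exact Or.inr (Or.inr (Or.inl rfl))
    refine le_trans ?_ (Set.ncard_le_ncard hsub (Set.toFinite _))
    exact three_le_ncard_of_triple (Set.toFinite _) e1 e2 e3
      mem_triple_left mem_triple_mid mem_triple_right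
  have hAcard : A.ncard ≤ 1 := by
    rw [hA, Set.ncard_singleton]
  have hlt : H.edgeSet.ncard < G.edgeSet.ncard := by
    rw [hHdef]
    exact edge_lt G D A hDsub (by omega)
  have hHac : H.Adj a c := by
    rw [hadjH]
    exact Or.inr ⟨by rw [hA]; rfl, hac'⟩
  have hHne : H.edgeSet.Nonempty := ⟨s(a, c), hHac⟩
  have hrealH : ∀ x y : V, G.Adj x y → x ≠ v → y ≠ v → x ≠ b → y ≠ b → H.Adj x y := by
    intro x y h hxv hyv hxb hyb
    rw [hadjH]
    exact Or.inl ⟨h, hDnot x y hxv hyv hxb hyb⟩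
  have hdegH : ∀ x, nd H x = 0 ∨ 3 ≤ nd H x := by
    intro x
    by_cases hxv : x = v
    · subst hxv
      left
      have hemp : H.neighborSet x = ∅ :=
        Set.eq_empty_iff_forall_notMem.mpr (fun y hy => hviso y hy)
      simp [nd, hemp]
    · by_cases hxb : x = b
      · subst hxb
        left
        have hemp : H.neighborSet x = ∅ :=
          Set.eq_empty_iff_forall_notMem.mpr (fun y hy => hbiso y hy)
        simp [nd, hemp]
      · by_cases hxa : x = a
        · rw [hxa]
          right
          have hsubN : ({v, b} : Set V) ⊆ G.neighborSet a := by
            intro z hz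
            rcases hz with rfl | rfl
            · exact hva.symm
            · exact hba.symm
          have hvb' : v ≠ b := fun hcx => hbv hcx.symm
          have hcard2 : ({v, b} : Set V).ncard = 2 := Set.ncard_pair hvb'
          have hdiff : (G.neighborSet a \ {v, b}).ncard =
              (G.neighborSet a).ncard - 2 := by
            rw [Set.ncard_diff hsubN (Set.toFinite _), hcard2]
          have h4 : 4 ≤ (G.neighborSet a).ncard := ha4
          have h2' : 1 < (G.neighborSet a \ {v, b}).ncard := by omega
          obtain ⟨s, hs, t, ht, hst⟩ := (Set.one_lt_ncard (Set.toFinite _)).mp h2'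
          obtain ⟨hsN, hsvb⟩ := hs
          obtain ⟨htN, htvb⟩ := ht
          simp only [Set.mem_insert_iff, Set.mem_singleton_iff, not_or] at hsvb htvb
          have hsc : s ≠ c := fun hcx => hac (hcx ▸ hsN)
          have htc : t ≠ c := fun hcx => hac (hcx ▸ htN)
          refine three_le_ncard_of_triple (Set.toFinite _) hsc.symm htc.symm hst
            (?_ : c ∈ H.neighborSet a) ?_ ?_
          · exact hHac
          · exact hrealH a s hsN hav hsvb.1 hab' hsvb.2
          · exact hrealH a t htN hav htvb.1 hab' htvb.2
        · by_cases hxc : x = c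
          · rw [hxc]
            right
            have hsubN : ({v, b} : Set V) ⊆ G.neighborSet c := by
              intro z hz
              rcases hz with rfl | rfl
              · exact hvc.symm
              · exact hbc.symm
            have hvb' : v ≠ b := fun hcx => hbv hcx.symm
            have hcard2 : ({v, b} : Set V).ncard = 2 := Set.ncard_pair hvb'
            have hdiff : (G.neighborSet c \ {v, b}).ncard =
                (G.neighborSet c).ncard - 2 := by
              rw [Set.ncard_diff hsubN (Set.toFinite _), hcard2]
            have h4 : 4 ≤ (G.neighborSet c).ncard := hc4
            have h2' : 1 < (G.neighborSet c \ {v, b}).ncard := by omega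
            obtain ⟨s, hs, t, ht, hst⟩ := (Set.one_lt_ncard (Set.toFinite _)).mp h2'
            obtain ⟨hsN, hsvb⟩ := hs
            obtain ⟨htN, htvb⟩ := ht
            simp only [Set.mem_insert_iff, Set.mem_singleton_iff, not_or] at hsvb htvb
            have hsa : s ≠ a := fun hcx => hac (G.adj_symm (hcx ▸ hsN))
            have hta : t ≠ a := fun hcx => hac (G.adj_symm (hcx ▸ htN))
            have hcb : c ≠ b := fun hcx => hbc' hcx.symm
            refine three_le_ncard_of_triple (Set.toFinite _) hsa.symm hta.symm hst
              (?_ : a ∈ H.neighborSet c) ?_ ?_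
            · exact hHac.symm
            · exact hrealH c s hsN hcv hsvb.1 hcb hsvb.2
            · exact hrealH c t htN hcv htvb.1 hcb htvb.2
          · have hxnotin : ∀ y, H.Adj x y → G.Adj x y := by
              intro y hy
              rcases hHG x y hy with h | h
              · exact h
              · exfalso
                rcases h with ⟨h1, _⟩ | ⟨h1, _⟩ | ⟨h1, _⟩ | ⟨h1, _⟩ <;>
                  [exact hxa h1; exact hxc h1; exact hxc h1; exact hxa h1]
            rcases hdeg x with h0 | h3
            · left
              have h0' : G.neighborSet x = ∅ := by
                rw [nd, Set.ncard_eq_zero (Set.toFinite _)] at h0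
                exact h0
              have hemp : H.neighborSet x = ∅ := by
                apply Set.eq_empty_iff_forall_notMem.mpr
                intro y hy
                have hmem : y ∈ G.neighborSet x := hxnotin y hy
                rw [h0'] at hmem
                exact hmem
              simp [nd, hemp]
            · right
              refine le_trans h3 (Set.ncard_le_ncard ?_ (Set.toFinite _))
              intro y hy
              have hyv : y ≠ v := by
                intro hcx
                have hadj : G.Adj v x := G.adj_symm (hcx ▸ (hy : G.Adj x y))
                rcases hNmem x hadj with h | h | h
                · exact hxa h
                · exact hxb h
                · exact hxc h
              have hyb : y ≠ b := by
                intro hcx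
                have hadj : G.Adj b x := G.adj_symm (hcx ▸ (hy : G.Adj x y))
                rcases hNbmem x hadj with h | h | h
                · exact hxa h
                · exact hxv h
                · exact hxc h
              exact hrealH x y hy hxv hyv hxb hyb
  have hconn := IH H hlt hHne hdegH
  exact conn4_lift hHG hva hvc hva hviso hconn

lemma del_edge [Fintype V] {G : SimpleGraph V} {u w : V} (huw : G.Adj u w)
    (h4u : 4 ≤ nd G u) (h4w : 4 ≤ nd G w)
    (hdeg : ∀ x, nd G x = 0 ∨ 3 ≤ nd G x)
    (IH : ∀ H : SimpleGraph V, H.edgeSet.ncard < G.edgeSet.ncard → H.edgeSet.Nonempty →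
      (∀ x, nd H x = 0 ∨ 3 ≤ nd H x) → Conn4 H) : Conn4 G := by
  classical
  haveI : Finite (Sym2 V) := finite_sym2
  set D : Set (Sym2 V) := {s(u, w)} with hD
  set H := SimpleGraph.fromEdgeSet ((G.edgeSet \ D) ∪ (∅ : Set (Sym2 V))) with hHdef
  have hadjH : ∀ x y, H.Adj x y ↔
      ((G.Adj x y ∧ s(x, y) ∉ D) ∨ (s(x, y) ∈ (∅ : Set (Sym2 V)) ∧ x ≠ y)) :=
    fun x y => fromDA G D ∅ x y
  have hHG : ∀ x y, H.Adj x y → G.Adj x y := by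
    intro x y hx
    rw [hadjH] at hx
    rcases hx with ⟨h1, _⟩ | ⟨h1, _⟩
    · exact h1
    · exact absurd h1 (Set.notMem_empty _)
  have hDnot : ∀ x y : V, x ≠ u → x ≠ w → s(x, y) ∉ D := by
    intro x y hxu hxw hmem
    rw [hD] at hmem
    rw [Set.mem_singleton_iff, Sym2.eq_iff] at hmem
    tauto
  have hrealH : ∀ x y : V, G.Adj x y → x ≠ u → x ≠ w → H.Adj x y := by
    intro x y h hxu hxw
    rw [hadjH]
    exact Or.inl ⟨h, hDnot x y hxu hxw⟩
  have hDsub : D ⊆ G.edgeSet := by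
    intro e he
    rw [hD, Set.mem_singleton_iff] at he
    subst he
    exact huw
  have hlt : H.edgeSet.ncard < G.edgeSet.ncard := by
    rw [hHdef]
    refine edge_lt G D ∅ hDsub ?_
    rw [hD]
    simp
  have husub : G.neighborSet u \ {w} ⊆ H.neighborSet u := by
    intro y hy
    obtain ⟨hyN, hyw⟩ := hy
    rw [Set.mem_singleton_iff] at hyw
    have : H.Adj y u := by
      refine hrealH y u (G.adj_symm hyN) ?_ ?_
      · intro hcx
        subst hcx
        exact G.irrefl hyN
      · exact hyw
    exact this.symm
  have hucard : 3 ≤ (G.neighborSet u \ {w}).ncard := by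
    rw [Set.ncard_diff_singleton_of_mem (show w ∈ G.neighborSet u from huw)]
    have : 4 ≤ (G.neighborSet u).ncard := h4u
    omega
  have hu3 : 3 ≤ nd H u := le_trans hucard (Set.ncard_le_ncard husub (Set.toFinite _))
  have hwsub : G.neighborSet w \ {u} ⊆ H.neighborSet w := by
    intro y hy
    obtain ⟨hyN, hyu⟩ := hy
    rw [Set.mem_singleton_iff] at hyu
    have : H.Adj y w := by
      refine hrealH y w (G.adj_symm hyN) hyu ?_
      intro hcx
      subst hcx
      exact G.irrefl hyN
    exact this.symm
  have hwcard : 3 ≤ (G.neighborSet w \ {u}).ncard := by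
    rw [Set.ncard_diff_singleton_of_mem (show u ∈ G.neighborSet w from huw.symm)]
    have : 4 ≤ (G.neighborSet w).ncard := h4w
    omega
  have hw3 : 3 ≤ nd H w := le_trans hwcard (Set.ncard_le_ncard hwsub (Set.toFinite _))
  have hHne : H.edgeSet.Nonempty := by
    have : (H.neighborSet u).Nonempty := by
      rw [← Set.ncard_pos (Set.toFinite _)]
      have h3' : 3 ≤ (H.neighborSet u).ncard := hu3
      omega
    obtain ⟨y, hy⟩ := this
    exact ⟨s(u, y), hy⟩
  have hdegH : ∀ x, nd H x = 0 ∨ 3 ≤ nd H x := by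
    intro x
    by_cases hxu : x = u
    · subst hxu
      exact Or.inr hu3
    · by_cases hxw : x = w
      · subst hxw
        exact Or.inr hw3
      · rcases hdeg x with h0 | h3
        · left
          have h0' : G.neighborSet x = ∅ := by
            rw [nd, Set.ncard_eq_zero (Set.toFinite _)] at h0
            exact h0
          have hemp : H.neighborSet x = ∅ := by
            apply Set.eq_empty_iff_forall_notMem.mpr
            intro y hy
            have hmem : y ∈ G.neighborSet x := hHG x y hy
            rw [h0'] at hmem
            exact hmem
          simp [nd, hemp]
        · right
          refine le_trans h3 (Set.ncard_le_ncard ?_ (Set.toFinite _))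
          intro y hy
          exact hrealH x y hy hxu hxw
  exact conn4_mono hHG (IH H hlt hHne hdegH)

lemma case_t2 [Fintype V] {G : SimpleGraph V} {v a b c : V}
    (hN : G.neighborSet v = {a, b, c})
    (hab' : a ≠ b) (hac' : a ≠ c) (hbc' : b ≠ c)
    (hab : G.Adj a b) (hbc : G.Adj b c) (hac : ¬ G.Adj a c)
    (hdeg : ∀ x, nd G x = 0 ∨ 3 ≤ nd G x)
    (IH : ∀ H : SimpleGraph V, H.edgeSet.ncard < G.edgeSet.ncard → H.edgeSet.Nonempty →
      (∀ x, nd H x = 0 ∨ 3 ≤ nd H x) → Conn4 H) : Conn4 G := by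
  classical
  have hva : G.Adj v a := by rw [← SimpleGraph.mem_neighborSet, hN]; exact mem_triple_left
  have hvb : G.Adj v b := by rw [← SimpleGraph.mem_neighborSet, hN]; exact mem_triple_mid
  have hvc : G.Adj v c := by rw [← SimpleGraph.mem_neighborSet, hN]; exact mem_triple_right
  have hav : a ≠ v := hva.ne'
  have hbv : b ≠ v := hvb.ne'
  have hcv : c ≠ v := hvc.ne'
  by_cases hb3 : nd G b = 3
  · -- N(b) = {a, v, c}
    have hsubb : ({a, v, c} : Set V) ⊆ G.neighborSet b := by
      intro z hz
      rcases hz with rfl | rfl | rfl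
      · exact hab.symm
      · exact hvb.symm
      · exact hbc
    have hcard3 : ({a, v, c} : Set V).ncard = 3 :=
      Set.ncard_eq_three.mpr ⟨a, v, c, hav, hac', fun hcx => hcv hcx.symm, rfl⟩
    have hNb : G.neighborSet b = {a, v, c} := by
      have := Set.eq_of_subset_of_ncard_le hsubb
        (by rw [hcard3]; have : (G.neighborSet b).ncard = 3 := hb3; omega) (Set.toFinite _)
      exact this.symm
    by_cases ha3 : nd G a = 3
    · -- third neighbour w of a
      have hsuba : ({v, b} : Set V) ⊆ G.neighborSet a := by
        intro z hz
        rcases hz with rfl | rfl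
        · exact hva.symm
        · exact hab
      have hvb' : v ≠ b := fun hcx => hbv hcx.symm
      have hdiffne : (G.neighborSet a \ {v, b}).Nonempty := by
        rw [← Set.ncard_pos (Set.toFinite _)]
        rw [Set.ncard_diff hsuba (Set.toFinite _), Set.ncard_pair hvb']
        have : (G.neighborSet a).ncard = 3 := ha3
        omega
      obtain ⟨w, hwN, hwvb⟩ := hdiffne
      simp only [Set.mem_insert_iff, Set.mem_singleton_iff, not_or] at hwvb
      obtain ⟨hwv, hwb⟩ := hwvb
      have haw : G.Adj a w := hwN
      have hwa : w ≠ a := haw.ne'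
      have hwc : w ≠ c := by
        intro hcx
        subst hcx
        exact hac haw
      have hNa : G.neighborSet a = {v, w, b} := by
        have hsub2 : ({v, w, b} : Set V) ⊆ G.neighborSet a := by
          intro z hz
          rcases hz with rfl | rfl | rfl
          · exact hva.symm
          · exact haw
          · exact hab
        have hc3 : ({v, w, b} : Set V).ncard = 3 :=
          Set.ncard_eq_three.mpr ⟨v, w, b, fun hcx => hwv hcx.symm, hvb', hwb, rfl⟩
        have := Set.eq_of_subset_of_ncard_le hsub2
          (by rw [hc3]; have : (G.neighborSet a).ncard = 3 := ha3; omega) (Set.toFinite _)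
        exact this.symm
      have hnvw : ¬ G.Adj v w := by
        intro hadj
        rcases (by
          have : w ∈ G.neighborSet v := hadj
          rw [hN] at this
          simpa using this : w = a ∨ w = b ∨ w = c) with h | h | h
        · exact hwa h
        · exact hwb h
        · exact hwc h
      have hnwb : ¬ G.Adj w b := by
        intro hadj
        rcases (by
          have : w ∈ G.neighborSet b := hadj.symm
          rw [hNb] at this
          simpa using this : w = a ∨ w = v ∨ w = c) with h | h | h
        · exact hwa h
        · exact hwv h
        · exact hwc h
      exact step hNa (fun hcx => hwv hcx.symm) hvb' hwb hnvw hnwb hdeg IH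
    · have ha4 : 4 ≤ nd G a := by
        rcases hdeg a with h0 | h3
        · exact absurd h0 (nd_ne_zero hva.symm)
        · omega
      by_cases hc3 : nd G c = 3
      · -- symmetric wing at c
        have hsubc : ({v, b} : Set V) ⊆ G.neighborSet c := by
          intro z hz
          rcases hz with rfl | rfl
          · exact hvc.symm
          · exact hbc.symm
        have hvb' : v ≠ b := fun hcx => hbv hcx.symm
        have hdiffne : (G.neighborSet c \ {v, b}).Nonempty := by
          rw [← Set.ncard_pos (Set.toFinite _)]
          rw [Set.ncard_diff hsubc (Set.toFinite _), Set.ncard_pair hvb']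
          have : (G.neighborSet c).ncard = 3 := hc3
          omega
        obtain ⟨w, hwN, hwvb⟩ := hdiffne
        simp only [Set.mem_insert_iff, Set.mem_singleton_iff, not_or] at hwvb
        obtain ⟨hwv, hwb⟩ := hwvb
        have hcw : G.Adj c w := hwN
        have hwc : w ≠ c := hcw.ne'
        have hwa : w ≠ a := by
          intro hcx
          subst hcx
          exact hac hcw.symm
        have hNc : G.neighborSet c = {v, w, b} := by
          have hsub2 : ({v, w, b} : Set V) ⊆ G.neighborSet c := by
            intro z hz
            rcases hz with rfl | rfl | rfl
            · exact hvc.symm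
            · exact hcw
            · exact hbc.symm
          have hc3' : ({v, w, b} : Set V).ncard = 3 :=
            Set.ncard_eq_three.mpr ⟨v, w, b, fun hcx => hwv hcx.symm, hvb', hwb, rfl⟩
          have := Set.eq_of_subset_of_ncard_le hsub2
            (by rw [hc3']; have : (G.neighborSet c).ncard = 3 := hc3; omega) (Set.toFinite _)
          exact this.symm
        have hnvw : ¬ G.Adj v w := by
          intro hadj
          rcases (by
            have : w ∈ G.neighborSet v := hadj
            rw [hN] at this
            simpa using this : w = a ∨ w = b ∨ w = c) with h | h | h
          · exact hwa h
          · exact hwb h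
          · exact hwc h
        have hnwb : ¬ G.Adj w b := by
          intro hadj
          rcases (by
            have : w ∈ G.neighborSet b := hadj.symm
            rw [hNb] at this
            simpa using this : w = a ∨ w = v ∨ w = c) with h | h | h
          · exact hwa h
          · exact hwv h
          · exact hwc h
        exact step hNc (fun hcx => hwv hcx.symm) hvb' hwb hnvw hnwb hdeg IH
      · have hc4 : 4 ≤ nd G c := by
          rcases hdeg c with h0 | h3
          · exact absurd h0 (nd_ne_zero hvc.symm)
          · omega
        exact op3 hN hNb hab' hac' hbc' hac ha4 hc4 hdeg IH
  · have hb4 : 4 ≤ nd G b := by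
      rcases hdeg b with h0 | h3
      · exact absurd h0 (nd_ne_zero hvb.symm)
      · omega
    exact op2 hN hab' hac' hbc' hac hb4 hdeg IH

lemma at_deg3 [Fintype V] {G : SimpleGraph V} {v : V} (h3 : nd G v = 3)
    (hdeg : ∀ x, nd G x = 0 ∨ 3 ≤ nd G x)
    (IH : ∀ H : SimpleGraph V, H.edgeSet.ncard < G.edgeSet.ncard → H.edgeSet.Nonempty →
      (∀ x, nd H x = 0 ∨ 3 ≤ nd H x) → Conn4 H) : Conn4 G := by
  classical
  obtain ⟨p, q, r, hpq', hpr', hqr', hN⟩ :=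
    Set.ncard_eq_three.mp (h3 : (G.neighborSet v).ncard = 3)
  have hvp : G.Adj v p := by rw [← SimpleGraph.mem_neighborSet, hN]; exact mem_triple_left
  have hvq : G.Adj v q := by rw [← SimpleGraph.mem_neighborSet, hN]; exact mem_triple_mid
  have hvr : G.Adj v r := by rw [← SimpleGraph.mem_neighborSet, hN]; exact mem_triple_right
  have hperm1 : G.neighborSet v = {q, p, r} := by
    rw [hN]; ext z; simp only [Set.mem_insert_iff, Set.mem_singleton_iff]; tauto
  have hperm2 : G.neighborSet v = {p, r, q} := by
    rw [hN]; ext z; simp only [Set.mem_insert_iff, Set.mem_singleton_iff]; tauto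
  by_cases Apq : G.Adj p q
  · by_cases Apr : G.Adj p r
    · by_cases Aqr : G.Adj q r
      · exact conn4_of_K4 hvp hvq hvr Apq Apr Aqr
      · exact case_t2 hperm1 hpq'.symm hqr' hpr' Apq.symm Apr Aqr hdeg IH
    · by_cases Aqr : G.Adj q r
      · exact case_t2 hN hpq' hpr' hqr' Apq Aqr Apr hdeg IH
      · exact step hperm2 hpr' hpq' hqr'.symm Apr (fun h => Aqr h.symm) hdeg IH
  · by_cases Apr : G.Adj p r
    · by_cases Aqr : G.Adj q r
      · exact case_t2 hperm2 hpr' hpq' hqr'.symm Apr Aqr.symm Apq hdeg IH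
      · exact step hN hpq' hpr' hqr' Apq Aqr hdeg IH
    · by_cases Aqr : G.Adj q r
      · exact step hperm1 hpq'.symm hqr' hpr' (fun h => Apq h.symm) Apr hdeg IH
      · exact step hN hpq' hpr' hqr' Apq Aqr hdeg IH

lemma conn4_main [Fintype V] : ∀ (n : ℕ) (G : SimpleGraph V), G.edgeSet.ncard ≤ n →
    G.edgeSet.Nonempty → (∀ x, nd G x = 0 ∨ 3 ≤ nd G x) → Conn4 G := by
  classical
  haveI : Finite (Sym2 V) := finite_sym2
  intro n
  induction n with
  | zero =>
    intro G hle hne _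
    exfalso
    have := (Set.ncard_pos (Set.toFinite _)).mpr hne
    omega
  | succ n ih =>
    intro G hle hne hdeg
    have IH : ∀ H : SimpleGraph V, H.edgeSet.ncard < G.edgeSet.ncard → H.edgeSet.Nonempty →
        (∀ x, nd H x = 0 ∨ 3 ≤ nd H x) → Conn4 H := by
      intro H h1 h2 h3x
      exact ih H (by omega) h2 h3x
    obtain ⟨e, he⟩ := hne
    revert he
    refine Sym2.inductionOn e ?_
    intro x y he
    have hxy : G.Adj x y := he
    by_cases h3x : nd G x = 3
    · exact at_deg3 h3x hdeg IH
    · by_cases h3y : nd G y = 3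
      · exact at_deg3 h3y hdeg IH
      · have h4x : 4 ≤ nd G x := by
          rcases hdeg x with h0 | hx3
          · exact absurd h0 (nd_ne_zero hxy)
          · omega
        have h4y : 4 ≤ nd G y := by
          rcases hdeg y with h0 | hy3
          · exact absurd h0 (nd_ne_zero hxy.symm)
          · omega
        exact del_edge hxy h4x h4y hdeg IH

lemma adj_of_walk_ne {W' : Type*} {G' : SimpleGraph W'} {x y : W'} (hxy : x ≠ y)
    (w : G'.Walk x y) : ∃ z, G'.Adj x z := by
  cases w with
  | nil => exact absurd rfl hxy
  | cons h _ => exact ⟨_, h⟩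

end DiracSP

/-- Dirac's theorem: a simple 2-connected series-parallel graph
(no `K₄`-subdivision) with at least two edges has a vertex of degree 2. -/
theorem seriesParallel_graph_has_degree_two_vertex {V : Type*} [Fintype V]
    (G : SimpleGraph V) [DecidableRel G.Adj] (hconn : G.Connected)
    (h2conn : ∀ v : V, ((⊤ : G.Subgraph).deleteVerts {v}).coe.Connected)
    (hedges : 2 ≤ G.edgeSet.ncard) (hK4 : ¬ HasK4Subdivision G) :
    ∃ v : V, G.degree v = 2 := by
  classical
  haveI : Finite (Sym2 V) := finite_sym2
  by_contra hno
  push_neg at hno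
  have hndeq : ∀ v, nd G v = G.degree v := by
    intro v
    rw [nd, Set.ncard_eq_toFinset_card', Set.toFinset_card]
    exact G.card_neighborSet_eq_degree v
  have hbig : ∀ u v : V, ∃ w : V, w ≠ u ∧ w ≠ v := by
    intro u v
    by_contra hcon
    push_neg at hcon
    have hsub : G.edgeSet ⊆ {s(u, v)} := by
      intro e
      induction e using Sym2.inductionOn with
      | _ x y =>
        intro he
        have hxy : G.Adj x y := he
        have hx : x = u ∨ x = v := by
          by_cases hxu : x = u
          · exact Or.inl hxu
          · exact Or.inr (hcon x hxu)
        have hy : y = u ∨ y = v := by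
          by_cases hyu : y = u
          · exact Or.inl hyu
          · exact Or.inr (hcon y hyu)
        rcases hx with rfl | rfl <;> rcases hy with rfl | rfl
        · exact absurd hxy (G.irrefl)
        · rfl
        · rw [Set.mem_singleton_iff]
          exact Sym2.eq_swap
        · exact absurd hxy (G.irrefl)
    have hle : G.edgeSet.ncard ≤ 1 := by
      have := Set.ncard_le_ncard hsub (Set.toFinite _)
      rwa [Set.ncard_singleton] at this
    omega
  have hd1 : ∀ v : V, ∃ u, G.Adj v u := by
    intro v
    obtain ⟨w, hw1, _⟩ := hbig v v
    obtain ⟨wk⟩ := hconn.preconnected v w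
    exact adj_of_walk_ne (fun h => hw1 h.symm) wk
  have hd1' : ∀ v : V, nd G v ≠ 1 := by
    intro v h1
    obtain ⟨u, hu⟩ : ∃ u, G.neighborSet v = {u} := Set.ncard_eq_one.mp h1
    have hvu : G.Adj v u := by
      rw [← SimpleGraph.mem_neighborSet, hu]
      rfl
    obtain ⟨w, hwu, hwv⟩ := hbig u v
    have hvmem : v ∈ ((⊤ : G.Subgraph).deleteVerts {u}).verts := by
      rw [SimpleGraph.Subgraph.deleteVerts_verts, SimpleGraph.Subgraph.verts_top]
      exact ⟨trivial, by simp [hvu.ne]⟩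
    have hwmem : w ∈ ((⊤ : G.Subgraph).deleteVerts {u}).verts := by
      rw [SimpleGraph.Subgraph.deleteVerts_verts, SimpleGraph.Subgraph.verts_top]
      exact ⟨trivial, by simp [hwu]⟩
    obtain ⟨wk⟩ := (h2conn u).preconnected ⟨v, hvmem⟩ ⟨w, hwmem⟩
    have hne' : (⟨v, hvmem⟩ : ((⊤ : G.Subgraph).deleteVerts {u}).verts) ≠ ⟨w, hwmem⟩ := by
      intro hcx
      exact hwv (congrArg Subtype.val hcx).symm
    obtain ⟨z, hz⟩ := adj_of_walk_ne hne' wk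
    have hzadj : G.Adj v z.val := ((⊤ : G.Subgraph).deleteVerts {u}).coe_adj_sub _ _ hz
    have hzu : z.val ≠ u := by
      have hz2 := z.property
      simp only [SimpleGraph.Subgraph.deleteVerts_verts, SimpleGraph.Subgraph.verts_top,
        Set.mem_diff, Set.mem_univ, true_and, Set.mem_singleton_iff] at hz2
      exact hz2
    have : z.val ∈ G.neighborSet v := hzadj
    rw [hu, Set.mem_singleton_iff] at this
    exact hzu this
  have hdeg3 : ∀ x, nd G x = 0 ∨ 3 ≤ nd G x := by
    intro x
    right
    obtain ⟨u, hu⟩ := hd1 x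
    have h1 : nd G x ≠ 0 := nd_ne_zero hu
    have h2x : nd G x ≠ 1 := hd1' x
    have h3x : nd G x ≠ 2 := by
      rw [hndeq]
      exact hno x
    omega
  have hC : Conn4 G := conn4_main G.edgeSet.ncard G le_rfl
    (Set.nonempty_of_ncard_ne_zero (by omega)) hdeg3
  exact hK4 (hasK4_of_conn4 hC)

end PaperBC
end

section
/- Let M' be a simple matroid admitting an ordering < under which the minimal broken circuits are pairwise disjoint, and let M = P(M', U_{m,m+1}) be the parallel connection of M' with U_{m,m+1} (m ≥ 2) relative to their unique common element e. Extend < to an ordering ≺ of the ground set of M in which e is the least element of the ground set of U_{m,m+1}. Then the set of minimal broken circuits of (M,≺) equals the set of minimal broken circuits of (M',<) together with the single extra set C_{m+1} − e, where C_{m+1} is the unique circuit of U_{m,m+1}; in particular the minimal broken circuits of (M,≺) are pairwise disjoint. -/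
open Set Polynomial Matroid CategoryTheory

universe u

namespace PaperBC

variable {α : Type*}

/-- minimal broken circuits of a parallel connection with
`U_{m,m+1}`, when `e` is chosen least in the ground set of `U_{m,m+1}`. -/
theorem minBrokenCircuits_parallelConn_unif {α : Type*} (M M' P : Matroid α)
    (e : α) (m : ℕ) (h2 : 2 ≤ m) (hfin : M.E.Finite) (hsimple : MSimple M')
    (hP : IsUnifNearCircuit P m) (hpc : IsParallelConn M M' P e)
    (r' : α → α → Prop) (hlin' : IsLinearOrder α r')
    (hdisj' : ∀ B B', MinBrokenCircuit r' M' B → MinBrokenCircuit r' M' B' →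
      B ≠ B' → Disjoint B B')
    (r : α → α → Prop) (hlin : IsLinearOrder α r)
    (hagree : ∀ a ∈ M'.E, ∀ b ∈ M'.E, (r a b ↔ r' a b))
    (hleast : ∀ x ∈ P.E, r e x) :
    {B | MinBrokenCircuit r M B} =
        {B | MinBrokenCircuit r' M' B} ∪ {P.E \ {e}} ∧
      ∀ B B', MinBrokenCircuit r M B → MinBrokenCircuit r M B' → B ≠ B' →
        Disjoint B B' := by
  haveI := hlin
  haveI := hlin'
  obtain ⟨hcap, hE, -, -, -, -, hcirc⟩ := hpc
  have heMP : e ∈ M'.E ∩ P.E := hcap ▸ rfl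
  have heM' : e ∈ M'.E := heMP.1
  have heP : e ∈ P.E := heMP.2
  have hcapmem : ∀ x, x ∈ M'.E → x ∈ P.E → x = e := by
    intro x h1 h3
    have hx : x ∈ M'.E ∩ P.E := ⟨h1, h3⟩
    rwa [hcap, Set.mem_singleton_iff] at hx
  have hM'sub : M'.E ⊆ M.E := hE ▸ Set.subset_union_left
  have hPsub : P.E ⊆ M.E := hE ▸ Set.subset_union_right
  have hPfin : P.E.Finite := hfin.subset hPsub
  -- helper: a set of ncard ≥ 3 minus two points is nonempty
  have nept : ∀ (C : Set α), C.Finite → 3 ≤ C.ncard → ∀ a b : α, (C \ {a, b}).Nonempty := by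
    intro C hCf h3 a b
    rw [Set.nonempty_iff_ne_empty]
    intro hemp
    have hsub : C ⊆ {a, b} := by
      intro x hx
      by_contra hxab
      have : x ∈ C \ {a, b} := ⟨hx, hxab⟩
      simp [hemp] at this
    have h1 := Set.ncard_le_ncard hsub ((Set.finite_singleton b).insert a)
    have h2' : ({a, b} : Set α).ncard ≤ 2 := by
      have := Set.ncard_insert_le a ({b} : Set α)
      simpa [Set.ncard_singleton] using this
    omega
  have hPcard : P.E.ncard = m + 1 := hP.1
  have hP3 : 3 ≤ P.E.ncard := by omega
  -- P.E is the unique circuit of P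
  have hPcirc : MCircuit P P.E := by
    refine ⟨?_, subset_rfl, ?_⟩
    · intro hind
      have := ((hP.2 P.E).1 hind).2
      omega
    · intro D hD
      have hlt : D.ncard < P.E.ncard := Set.ncard_lt_ncard hD hPfin
      exact (hP.2 D).2 ⟨hD.subset, by omega⟩
  have hPunique : ∀ C, MCircuit P C → C = P.E := by
    intro C hC
    by_contra hne
    exact hC.1 ((hP.2 C).2 ⟨hC.2.1, by
      have hlt : C.ncard < P.E.ncard := Set.ncard_lt_ncard ⟨hC.2.1, fun h => hne (Set.Subset.antisymm hC.2.1 h)⟩ hPfin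
      omega⟩)
  -- broken circuits of M' are broken circuits of M
  have toM : ∀ B, BrokenCircuit r' M' B → BrokenCircuit r M B := by
    rintro B ⟨C, g, hC, hgC, hmin, rfl⟩
    exact ⟨C, g, (hcirc C).2 (Or.inl hC), hgC,
      fun x hx => (hagree g (hC.2.1 hgC) x (hC.2.1 hx)).2 (hmin x hx), rfl⟩
  have hbcPE : BrokenCircuit r M (P.E \ {e}) :=
    ⟨P.E, e, (hcirc P.E).2 (Or.inr (Or.inl hPcirc)), heP, hleast, rfl⟩
  -- classification of broken circuits of M
  have classify : ∀ B, BrokenCircuit r M B →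
      ∃ B₀, B₀ ⊆ B ∧ (BrokenCircuit r' M' B₀ ∨ B₀ = P.E \ {e}) := by
    rintro B ⟨C, f, hC, hfC, hmin, rfl⟩
    rcases (hcirc C).1 hC with h1 | hcp | ⟨C₁, C₂, hC₁, hC₂, he1, he2, hCeq⟩
    · exact ⟨C \ {f}, subset_rfl, Or.inl ⟨C, f, h1, hfC,
        fun x hx => (hagree f (h1.2.1 hfC) x (h1.2.1 hx)).1 (hmin x hx), rfl⟩⟩
    · have hCP : C = P.E := hPunique C hcp
      have hfe : f = e := antisymm (hmin e (hCP ▸ heP)) (hleast f (hCP ▸ hfC))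
      exact ⟨C \ {f}, subset_rfl, Or.inr (by rw [hCP, hfe])⟩
    · have hC₂P : C₂ = P.E := hPunique C₂ hC₂
      subst hC₂P
      subst hCeq
      have hfmem : f ∈ C₁ ∪ P.E := hfC.1
      have hfne : f ≠ e := by simpa using hfC.2
      by_cases hfP : f ∈ P.E
      · -- B₀ = C₁ \ {e}
        refine ⟨C₁ \ {e}, ?_, Or.inl ⟨C₁, e, hC₁, he1, ?_, rfl⟩⟩
        · intro x hx
          have hxC₁ : x ∈ C₁ := hx.1
          have hxne : x ≠ e := by simpa using hx.2
          have hxf : x ≠ f := by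
            intro h; subst h
            exact hxne (hcapmem x (hC₁.2.1 hxC₁) hfP)
          exact ⟨⟨Or.inl hxC₁, by simpa using hxne⟩, by simpa using hxf⟩
        · intro x hx
          by_cases hxe : x = e
          · subst hxe; exact (hagree x (hC₁.2.1 hx) x (hC₁.2.1 hx)).1 (refl_of r x)
          · have hxmem : x ∈ (C₁ ∪ P.E) \ {e} := ⟨Or.inl hx, by simpa using hxe⟩
            have : r e x := trans_of r (hleast f hfP) (hmin x hxmem)
            exact (hagree e heM' x (hC₁.2.1 hx)).1 this
      · -- f ∈ C₁, B₀ = P.E \ {e}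
        refine ⟨P.E \ {e}, ?_, Or.inr rfl⟩
        intro x hx
        have hxP : x ∈ P.E := hx.1
        have hxne : x ≠ e := by simpa using hx.2
        have hxf : x ≠ f := by intro h; subst h; exact hfP hxP
        exact ⟨⟨Or.inr hxP, by simpa using hxne⟩, by simpa using hxf⟩
  -- ground set facts for broken circuits of M'
  have bcM'sub : ∀ B, BrokenCircuit r' M' B → B ⊆ M'.E := by
    rintro B ⟨C, g, hC, -, -, rfl⟩
    exact (Set.diff_subset).trans hC.2.1
  have bcM'nonempty : ∀ B, BrokenCircuit r' M' B → B.Nonempty := by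
    rintro B ⟨C, g, hC, -, -, rfl⟩
    have h3 := hsimple C hC
    have hCfin : C.Finite := hfin.subset (hC.2.1.trans hM'sub)
    obtain ⟨y, hy⟩ := nept C hCfin h3 g g
    exact ⟨y, hy.1, by simpa using hy.2⟩
  have hPEdiff_ne : (P.E \ {e}).Nonempty := by
    obtain ⟨y, hy⟩ := nept P.E hPfin hP3 e e
    exact ⟨y, hy.1, by simpa using hy.2⟩
  -- a broken circuit of M' cannot sit inside P.E \ {e}, and vice versa
  have notinPE : ∀ B, BrokenCircuit r' M' B → ¬ B ⊆ P.E \ {e} := by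
    intro B hB hsub
    obtain ⟨y, hy⟩ := bcM'nonempty B hB
    have hy1 := bcM'sub B hB hy
    have hy2 := hsub hy
    exact hy2.2 (by simpa using hcapmem y hy1 hy2.1)
  -- the set equality
  have key : {B | MinBrokenCircuit r M B} = {B | MinBrokenCircuit r' M' B} ∪ {P.E \ {e}} := by
    ext B
    constructor
    · rintro ⟨hB, hBmin⟩
      obtain ⟨B₀, hsub, hB₀ | rfl⟩ := classify B hB
      · have hBeq : B₀ = B := hBmin B₀ (toM B₀ hB₀) hsub
        subst hBeq
        left
        refine ⟨hB₀, ?_⟩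
        intro B'' hB'' hsub'
        exact hBmin B'' (toM B'' hB'') hsub'
      · right
        have := hBmin _ hbcPE hsub
        simpa using this.symm
    · rintro (⟨hB, hBmin⟩ | hBeq)
      · refine ⟨toM B hB, ?_⟩
        intro B'' hB'' hsub
        obtain ⟨B₀, hs0, hB₀ | rfl⟩ := classify B'' hB''
        · have hBeq : B₀ = B := hBmin B₀ hB₀ (hs0.trans hsub)
          exact Set.Subset.antisymm hsub (hBeq ▸ hs0)
        · exfalso
          obtain ⟨y, hy⟩ := hPEdiff_ne
          have hyB : y ∈ B := hsub (hs0 hy)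
          have hyM' : y ∈ M'.E := bcM'sub B hB hyB
          exact hy.2 (by simpa using hcapmem y hyM' hy.1)
      · have hBeq' : B = P.E \ {e} := hBeq
        subst hBeq'
        refine ⟨hbcPE, ?_⟩
        intro B'' hB'' hsub
        obtain ⟨B₀, hs0, hB₀ | rfl⟩ := classify B'' hB''
        · exact absurd (hs0.trans hsub) (notinPE B₀ hB₀)
        · exact Set.Subset.antisymm hsub hs0
  refine ⟨key, ?_⟩
  intro B B' hB hB' hne
  have hB1 : B ∈ {B | MinBrokenCircuit r' M' B} ∪ {P.E \ {e}} := key ▸ hB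
  have hB2 : B' ∈ {B | MinBrokenCircuit r' M' B} ∪ {P.E \ {e}} := key ▸ hB'
  have hdisjmix : ∀ D, MinBrokenCircuit r' M' D → Disjoint D (P.E \ {e}) := by
    intro D hD
    rw [Set.disjoint_left]
    intro x hxD hxP
    have hxM' : x ∈ M'.E := bcM'sub D hD.1 hxD
    exact hxP.2 (by simpa using hcapmem x hxM' hxP.1)
  rcases hB1 with hB1 | hB1 <;> rcases hB2 with hB2 | hB2
  · exact hdisj' B B' hB1 hB2 hne
  · have hB2' : B' = P.E \ {e} := hB2
    exact hB2' ▸ hdisjmix B hB1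
  · have hB1' : B = P.E \ {e} := hB1
    exact hB1' ▸ (hdisjmix B' hB2).symm
  · exact absurd (hB1.trans (Eq.symm hB2)) hne

end PaperBC
end
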